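/- arXiv:1311.2806 — 6 statements merged into one kernel-verified Lean document; each statement's English description precedes it below -/
import Mathlib

section
/- If a probability measure ν on ℝ^d has a nontrivial absolutely continuous component, i.e., ν = a·ν_ac + (1−a)·ν' with a > 0 and ν_ac absolutely continuous with respect to Lebesgue measure and ν' a probability measure, then ν satisfies the Cramér condition: for every α > 0, sup_{‖s‖ ≥ α} |∫ e^{i⟨s,x⟩} dν(x)| < 1. -/
open MeasureTheory Complex Filter Set
open scoped RealInnerProductSpace FourierTransform

variable {d : ℕ}

-- test instances
example : Measure.IsAddHaarMeasure (volume : Measure (EuclideanSpace ℝ (Fin d))) := inferInstance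

lemma integrable_of_bdd {μ : Measure (EuclideanSpace ℝ (Fin d))} [IsFiniteMeasure μ]
    {g : EuclideanSpace ℝ (Fin d) → ℝ} (hg : Continuous g) (C : ℝ) (h : ∀ x, ‖g x‖ ≤ C) :
    Integrable g μ :=
  (integrable_const C).mono' hg.aestronglyMeasurable (Filter.Eventually.of_forall h)

lemma null_hyperplane (s : EuclideanSpace ℝ (Fin d)) (hs : s ≠ 0) (c : ℝ) :
    volume {x : EuclideanSpace ℝ (Fin d) | (inner ℝ s x : ℝ) = c} = 0 := by
  set x₀ : EuclideanSpace ℝ (Fin d) := (c / ‖s‖ ^ 2) • s with hx₀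
  have hsx₀ : (inner ℝ s x₀ : ℝ) = c := by
    rw [hx₀, real_inner_smul_right, real_inner_self_eq_norm_sq,
      div_mul_cancel₀ c (pow_ne_zero 2 (norm_ne_zero_iff.mpr hs))]
  have key : {x : EuclideanSpace ℝ (Fin d) | (inner ℝ s x : ℝ) = c}
      = (fun x => x + (-x₀)) ⁻¹' (LinearMap.ker (innerSL ℝ s : EuclideanSpace ℝ (Fin d) →ₗ[ℝ] ℝ) : Set (EuclideanSpace ℝ (Fin d))) := by
    ext x
    simp only [Set.mem_preimage, SetLike.mem_coe, LinearMap.mem_ker, Set.mem_setOf_eq,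
      ContinuousLinearMap.coe_coe, innerSL_apply_apply, inner_add_right, inner_neg_right, hsx₀]
    constructor
    · intro h; rw [h]; ring
    · intro h; linarith
  rw [key, measure_preimage_add_right]
  refine Measure.addHaar_submodule _ _ ?_
  intro htop
  have : s ∈ LinearMap.ker (innerSL ℝ s : EuclideanSpace ℝ (Fin d) →ₗ[ℝ] ℝ) := by rw [htop]; exact Submodule.mem_top
  rw [LinearMap.mem_ker] at this
  simp only [ContinuousLinearMap.coe_coe, innerSL_apply_apply, real_inner_self_eq_norm_sq] at this
  exact hs (norm_eq_zero.mp (pow_eq_zero_iff two_ne_zero |>.mp this))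

lemma integrable_of_bdd' {F : Type*} [NormedAddCommGroup F]
    {μ : Measure (EuclideanSpace ℝ (Fin d))} [IsFiniteMeasure μ]
    {g : EuclideanSpace ℝ (Fin d) → F} (hg : Continuous g) (C : ℝ) (h : ∀ x, ‖g x‖ ≤ C) :
    Integrable g μ :=
  (integrable_const C).mono' hg.aestronglyMeasurable (Filter.Eventually.of_forall h)

lemma charfun_lt_one (μ : Measure (EuclideanSpace ℝ (Fin d))) [IsProbabilityMeasure μ]
    (hac : μ ≪ volume) (s : EuclideanSpace ℝ (Fin d)) (hs : s ≠ 0) :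
    ‖∫ x, Complex.exp (Complex.I * ((inner ℝ s x : ℝ) : ℂ)) ∂μ‖ < 1 := by
  set z := ∫ x, Complex.exp (Complex.I * ((inner ℝ s x : ℝ) : ℂ)) ∂μ with hz
  by_cases hz0 : z = 0
  · simp [hz0]
  have habs : ‖(starRingEnd ℂ) z / (‖z‖ : ℂ)‖ = 1 := by
    rw [norm_div, Complex.norm_conj, Complex.norm_real, norm_norm,
      div_self (norm_ne_zero_iff.mpr hz0)]
  obtain ⟨θ, hθ⟩ := (Complex.norm_eq_one_iff _).mp habs
  have hcont : Continuous fun x : EuclideanSpace ℝ (Fin d) => (inner ℝ s x : ℝ) :=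
    continuous_const.inner continuous_id
  have hi1 : Integrable (fun x => Complex.exp (((θ + (inner ℝ s x : ℝ) : ℝ) : ℂ) * Complex.I)) μ :=
    integrable_of_bdd' (by fun_prop) 1
      (fun x => le_of_eq (Complex.norm_exp_ofReal_mul_I _))
  have hicos : Integrable (fun x => Real.cos (θ + (inner ℝ s x : ℝ))) μ :=
    integrable_of_bdd' (by fun_prop) 1 (fun x => by
      rw [Real.norm_eq_abs]; exact Real.abs_cos_le_one _)
  have e1 : Complex.exp (θ * Complex.I) * z
      = ∫ x, Complex.exp (((θ + (inner ℝ s x : ℝ) : ℝ) : ℂ) * Complex.I) ∂μ := by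
    rw [hz, ← integral_const_mul]
    congr 1; funext x
    rw [← Complex.exp_add]; congr 1; push_cast; ring
  have e2 : ‖z‖ = ∫ x, Real.cos (θ + (inner ℝ s x : ℝ)) ∂μ := by
    have : ‖z‖ = (Complex.exp (θ * Complex.I) * z).re := by
      have hne : (‖z‖ : ℝ) ≠ 0 := norm_ne_zero_iff.mpr hz0
      rw [hθ, div_mul_eq_mul_div, mul_comm, Complex.mul_conj,
        show ((Complex.normSq z : ℝ) : ℂ) = (‖z‖ : ℂ) ^ 2 by
          rw [Complex.normSq_eq_norm_sq]; push_cast; ring,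
        sq, mul_div_assoc, div_self (by exact_mod_cast hne), mul_one, Complex.ofReal_re]
    rw [this, e1, ← RCLike.re_to_complex, ← integral_re hi1]
    congr 1; funext x
    rw [RCLike.re_to_complex, Complex.exp_ofReal_mul_I_re]
  have key : 0 < ∫ x, (1 - Real.cos (θ + (inner ℝ s x : ℝ))) ∂μ := by
    have hnn : 0 ≤ fun x : EuclideanSpace ℝ (Fin d) => 1 - Real.cos (θ + (inner ℝ s x : ℝ)) :=
      fun x => by simp [Real.cos_le_one]
    have hint : Integrable (fun x => 1 - Real.cos (θ + (inner ℝ s x : ℝ))) μ :=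
      (integrable_const 1).sub hicos
    rcases (integral_nonneg hnn).lt_or_eq with h | h
    · exact h
    · exfalso
      have hae := (integral_eq_zero_iff_of_nonneg hnn hint).mp h.symm
      have hzero : μ {x | ¬ (1 - Real.cos (θ + (inner ℝ s x : ℝ)) = 0)} = 0 := by
        simpa [Filter.EventuallyEq, ae_iff] using hae
      have hone : μ {x | 1 - Real.cos (θ + (inner ℝ s x : ℝ)) = 0} = 0 := by
        refine measure_mono_null ?_ (hac (measure_iUnion_null
          (fun n : ℤ => null_hyperplane s hs ((n : ℝ) * (2 * Real.pi) - θ))))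
        intro x hx
        simp only [Set.mem_setOf_eq] at hx
        have hc : Real.cos (θ + (inner ℝ s x : ℝ)) = 1 := by linarith
        obtain ⟨n, hn⟩ := (Real.cos_eq_one_iff _).mp hc
        exact Set.mem_iUnion.mpr ⟨n, by simp only [Set.mem_setOf_eq]; linarith⟩
      have hu : (Set.univ : Set (EuclideanSpace ℝ (Fin d)))
          ⊆ {x | ¬ (1 - Real.cos (θ + (inner ℝ s x : ℝ)) = 0)}
            ∪ {x | 1 - Real.cos (θ + (inner ℝ s x : ℝ)) = 0} := by
        intro x _
        by_cases h' : 1 - Real.cos (θ + (inner ℝ s x : ℝ)) = 0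
        · exact Or.inr h'
        · exact Or.inl h'
      have h2 : μ Set.univ ≤ 0 := le_trans (measure_mono hu)
        (le_trans (measure_union_le _ _) (by rw [hzero, hone, add_zero]))
      rw [measure_univ] at h2
      exact absurd h2 (by simp)
  have efin : ∫ x, (1 - Real.cos (θ + (inner ℝ s x : ℝ))) ∂μ = 1 - ‖z‖ := by
    rw [integral_sub (integrable_const 1) hicos, integral_const, Measure.real, measure_univ,
      ENNReal.toReal_one, smul_eq_mul, one_mul, e2]
  linarith [key, efin.symm.trans_le (le_of_eq rfl)]

set_option maxHeartbeats 1000000 in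
open scoped Topology FourierTransform RealInnerProductSpace NNReal ENNReal in
lemma charfun_ac_props (νac : Measure (EuclideanSpace ℝ (Fin d))) [IsProbabilityMeasure νac]
    (hac : νac ≪ volume) :
    Continuous (fun s : EuclideanSpace ℝ (Fin d) =>
        ∫ x, Complex.exp (Complex.I * ((inner ℝ s x : ℝ) : ℂ)) ∂νac) ∧
      Tendsto (fun s : EuclideanSpace ℝ (Fin d) =>
        ∫ x, Complex.exp (Complex.I * ((inner ℝ s x : ℝ) : ℂ)) ∂νac) (cocompact (EuclideanSpace ℝ (Fin d))) (𝓝 (0:ℂ)) := by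
  set F : EuclideanSpace ℝ (Fin d) → ℂ := fun x => ((νac.rnDeriv volume x).toReal : ℂ) with hF
  have hFi : Integrable F volume := (Measure.integrable_toReal_rnDeriv).ofReal
  have hmeas : AEMeasurable (fun x => (νac.rnDeriv volume x).toNNReal) volume :=
    (Measure.measurable_rnDeriv νac volume).ennreal_toNNReal.aemeasurable
  have hdens : νac = volume.withDensity (fun x => ((νac.rnDeriv volume x).toNNReal : ℝ≥0∞)) := by
    conv_lhs => rw [← Measure.withDensity_rnDeriv_eq νac volume hac]
    refine (withDensity_congr_ae ?_).symm
    filter_upwards [Measure.rnDeriv_lt_top νac volume] with x hx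
    exact ENNReal.coe_toNNReal hx.ne
  have hrep : (fun s : EuclideanSpace ℝ (Fin d) =>
        ∫ x, Complex.exp (Complex.I * ((inner ℝ s x : ℝ) : ℂ)) ∂νac)
      = (fun w : EuclideanSpace ℝ (Fin d) => ∫ v, 𝐞 (-(inner ℝ v w : ℝ)) • F v)
        ∘ (fun s : EuclideanSpace ℝ (Fin d) => (-(2 * Real.pi)⁻¹ : ℝ) • s) := by
    funext s
    show _ = ∫ v, 𝐞 (-(inner ℝ v ((-(2 * Real.pi)⁻¹ : ℝ) • s) : ℝ)) • F v
    calc ∫ x, Complex.exp (Complex.I * ((inner ℝ s x : ℝ) : ℂ)) ∂νac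
        = ∫ x, Complex.exp (Complex.I * ((inner ℝ s x : ℝ) : ℂ))
            ∂(volume.withDensity (fun x => ((νac.rnDeriv volume x).toNNReal : ℝ≥0∞))) := by
          conv_lhs => rw [hdens]
      _ = ∫ x, (νac.rnDeriv volume x).toNNReal • Complex.exp (Complex.I * ((inner ℝ s x : ℝ) : ℂ))
            ∂volume := integral_withDensity_eq_integral_smul₀ hmeas _
      _ = ∫ v, 𝐞 (-(inner ℝ v ((-(2 * Real.pi)⁻¹ : ℝ) • s) : ℝ)) • F v := by
          congr 1; funext v
          rw [Circle.smul_def, Real.fourierChar_apply, NNReal.smul_def, Complex.real_smul,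
            mul_comm]
          congr 1
          rw [real_inner_smul_right]
          congr 1
          rw [show (2 * Real.pi) * -((-(2 * Real.pi)⁻¹ : ℝ) * (inner ℝ v s : ℝ)) = (inner ℝ v s : ℝ) by
            field_simp, real_inner_comm]
          -- cast is definitional
          ring
  have hψ : Tendsto (fun s : EuclideanSpace ℝ (Fin d) => (-(2 * Real.pi)⁻¹ : ℝ) • s)
      (cocompact _) (cocompact _) := by
    have hne : (-(2 * Real.pi)⁻¹ : ℝ) ≠ 0 := by
      simp [Real.pi_ne_zero]
    show Filter.map _ _ ≤ _
    rw [show (fun s : EuclideanSpace ℝ (Fin d) => (-(2 * Real.pi)⁻¹ : ℝ) • s)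
        = ⇑(Homeomorph.smulOfNeZero (-(2 * Real.pi)⁻¹ : ℝ) hne) from rfl,
      Homeomorph.map_cocompact]
  have heq : (fun w : EuclideanSpace ℝ (Fin d) => ∫ v, 𝐞 (-(inner ℝ v w : ℝ)) • F v)
      = VectorFourier.fourierIntegral Real.fourierChar volume
        (innerₗ (EuclideanSpace ℝ (Fin d))) F := by
    funext w; rfl
  have hcontG : Continuous (fun w : EuclideanSpace ℝ (Fin d) => ∫ v, 𝐞 (-(inner ℝ v w : ℝ)) • F v) := by
    rw [heq]
    exact VectorFourier.fourierIntegral_continuous Real.continuous_fourierChar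
      (by exact continuous_inner) hFi
  have hRL : Tendsto (fun w : EuclideanSpace ℝ (Fin d) => ∫ v, 𝐞 (-(inner ℝ v w : ℝ)) • F v)
      (cocompact _) (𝓝 0) := tendsto_integral_exp_inner_smul_cocompact F
  rw [hrep]
  exact ⟨hcontG.comp (continuous_const_smul _), hRL.comp hψ⟩

lemma norm_charfun_le_one (μ : Measure (EuclideanSpace ℝ (Fin d))) [IsProbabilityMeasure μ]
    (s : EuclideanSpace ℝ (Fin d)) :
    ‖∫ x, Complex.exp (Complex.I * ((inner ℝ s x : ℝ) : ℂ)) ∂μ‖ ≤ 1 := by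
  calc ‖∫ x, Complex.exp (Complex.I * ((inner ℝ s x : ℝ) : ℂ)) ∂μ‖
      ≤ ∫ x, ‖Complex.exp (Complex.I * ((inner ℝ s x : ℝ) : ℂ))‖ ∂μ :=
        norm_integral_le_integral_norm _
    _ = 1 := by
        simp [Complex.norm_exp]

lemma integrable_charfun (μ : Measure (EuclideanSpace ℝ (Fin d))) [IsFiniteMeasure μ]
    (s : EuclideanSpace ℝ (Fin d)) :
    Integrable (fun x => Complex.exp (Complex.I * ((inner ℝ s x : ℝ) : ℂ))) μ := by
  refine integrable_of_bdd' ?_ 1 (fun x => ?_)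
  · have : Continuous fun x : EuclideanSpace ℝ (Fin d) => (inner ℝ s x : ℝ) :=
      continuous_const.inner continuous_id
    fun_prop
  · simp [Complex.norm_exp]

theorem cramer_condition_of_ac_component
    (d : ℕ) (ν νac ν' : Measure (EuclideanSpace ℝ (Fin d)))
    [IsProbabilityMeasure ν] [IsProbabilityMeasure νac] [IsProbabilityMeasure ν']
    (a : ℝ) (ha : 0 < a) (ha1 : a ≤ 1)
    (hdec : ν = ENNReal.ofReal a • νac + ENNReal.ofReal (1 - a) • ν')
    (hac : νac ≪ (volume : Measure (EuclideanSpace ℝ (Fin d)))) :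
    ∀ α : ℝ, 0 < α →
      (⨆ s : {s : EuclideanSpace ℝ (Fin d) // α ≤ ‖s‖},
        ‖∫ x, Complex.exp (Complex.I * (inner ℝ s.1 x : ℝ)) ∂ν‖) < 1 := by
  intro α hα
  obtain ⟨hcont, hRL⟩ := charfun_ac_props νac hac
  cases isEmpty_or_nonempty {s : EuclideanSpace ℝ (Fin d) // α ≤ ‖s‖} with
  | inl h => rw [Real.iSup_of_isEmpty]; norm_num
  | inr h =>
    obtain ⟨⟨s₀, hs₀⟩⟩ := id h
    -- Riemann-Lebesgue bound
    have hmem : {s : EuclideanSpace ℝ (Fin d) |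
        (∫ x, Complex.exp (Complex.I * ((inner ℝ s x : ℝ) : ℂ)) ∂νac) ∈ Metric.ball (0:ℂ) (1/2)}
        ∈ cocompact (EuclideanSpace ℝ (Fin d)) :=
      hRL (Metric.ball_mem_nhds (0:ℂ) (by norm_num))
    obtain ⟨K, hK, hKsub⟩ := (hasBasis_cocompact.mem_iff).mp hmem
    obtain ⟨R₀, hR₀⟩ := hK.isBounded.subset_closedBall (0 : EuclideanSpace ℝ (Fin d))
    set R : ℝ := max (R₀ + 1) α with hR
    have hRα : α ≤ R := le_max_right _ _
    have hhalf : ∀ s : EuclideanSpace ℝ (Fin d), R < ‖s‖ →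
        ‖∫ x, Complex.exp (Complex.I * ((inner ℝ s x : ℝ) : ℂ)) ∂νac‖ < 1/2 := by
      intro s hs
      have hsK : s ∉ K := by
        intro hsK
        have := hR₀ hsK
        rw [Metric.mem_closedBall, dist_zero_right] at this
        have : R₀ + 1 ≤ R := le_max_left _ _
        linarith
      have := hKsub hsK
      simpa [Metric.mem_ball, dist_zero_right] using this
    -- compact annulus
    set A : Set (EuclideanSpace ℝ (Fin d)) :=
      Metric.closedBall 0 R ∩ {s | α ≤ ‖s‖} with hA
    have hAc : IsCompact A :=
      (isCompact_closedBall 0 R).inter_right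
        (isClosed_le continuous_const continuous_norm)
    have hs₀pos : 0 < ‖s₀‖ := lt_of_lt_of_le hα hs₀
    have hAne : A.Nonempty := by
      refine ⟨(α / ‖s₀‖) • s₀, ?_, ?_⟩
      · rw [Metric.mem_closedBall, dist_zero_right, norm_smul, Real.norm_eq_abs,
          abs_of_pos (div_pos hα hs₀pos), div_mul_cancel₀ _ hs₀pos.ne']
        exact hRα
      · rw [Set.mem_setOf_eq, norm_smul, Real.norm_eq_abs,
          abs_of_pos (div_pos hα hs₀pos), div_mul_cancel₀ _ hs₀pos.ne']
    obtain ⟨smax, hsmaxA, hmax'⟩ := hAc.exists_isMaxOn hAne (hcont.norm.continuousOn)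
    have hmax : ∀ y ∈ A, ‖∫ x, Complex.exp (Complex.I * ((inner ℝ y x : ℝ) : ℂ)) ∂νac‖
        ≤ ‖∫ x, Complex.exp (Complex.I * ((inner ℝ smax x : ℝ) : ℂ)) ∂νac‖ := fun y hy => hmax' hy
    have hsmaxα : α ≤ ‖smax‖ := hsmaxA.2
    have hsmax0 : smax ≠ 0 := by
      intro h0
      rw [h0, norm_zero] at hsmaxα
      linarith
    set m : ℝ := ‖∫ x, Complex.exp (Complex.I * ((inner ℝ smax x : ℝ) : ℂ)) ∂νac‖ with hm
    have hm1 : m < 1 := charfun_lt_one νac hac smax hsmax0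
    set b : ℝ := max m (1/2) with hb
    have hb1 : b < 1 := max_lt hm1 (by norm_num)
    have hb0 : 0 ≤ b := le_trans (norm_nonneg _) (le_max_left _ _)
    have key : ∀ s : EuclideanSpace ℝ (Fin d), α ≤ ‖s‖ →
        ‖∫ x, Complex.exp (Complex.I * ((inner ℝ s x : ℝ) : ℂ)) ∂ν‖ ≤ a * b + (1 - a) := by
      intro s hs
      have hac_bd : ‖∫ x, Complex.exp (Complex.I * ((inner ℝ s x : ℝ) : ℂ)) ∂νac‖ ≤ b := by
        rcases le_or_gt ‖s‖ R with hsR | hsR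
        · exact le_trans (hmax s ⟨Metric.mem_closedBall.mpr (by rwa [dist_zero_right]), hs⟩)
            (le_max_left _ _)
        · exact le_trans (hhalf s hsR).le (le_max_right _ _)
      have hi_ac := integrable_charfun νac s
      have hi' := integrable_charfun ν' s
      have hsplit : ∫ x, Complex.exp (Complex.I * ((inner ℝ s x : ℝ) : ℂ)) ∂ν
          = (a : ℂ) * (∫ x, Complex.exp (Complex.I * ((inner ℝ s x : ℝ) : ℂ)) ∂νac)
            + ((1 - a : ℝ) : ℂ) * (∫ x, Complex.exp (Complex.I * ((inner ℝ s x : ℝ) : ℂ)) ∂ν') := by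
        rw [hdec, integral_add_measure (hi_ac.smul_measure ENNReal.ofReal_ne_top)
          (hi'.smul_measure ENNReal.ofReal_ne_top), integral_smul_measure, integral_smul_measure,
          ENNReal.toReal_ofReal ha.le, ENNReal.toReal_ofReal (by linarith : (0:ℝ) ≤ 1 - a)]
        simp [Complex.real_smul]
      rw [hsplit]
      calc ‖(a : ℂ) * _ + ((1 - a : ℝ) : ℂ) * _‖
          ≤ ‖(a : ℂ) * (∫ x, Complex.exp (Complex.I * ((inner ℝ s x : ℝ) : ℂ)) ∂νac)‖
            + ‖((1 - a : ℝ) : ℂ) * (∫ x, Complex.exp (Complex.I * ((inner ℝ s x : ℝ) : ℂ)) ∂ν')‖ :=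
            norm_add_le _ _
        _ ≤ a * b + (1 - a) * 1 := by
            rw [norm_mul, norm_mul]
            have h1 : ‖(a : ℂ)‖ = a := by
              rw [Complex.norm_real, Real.norm_eq_abs, abs_of_pos ha]
            have h2 : ‖((1 - a : ℝ) : ℂ)‖ = 1 - a := by
              rw [Complex.norm_real, Real.norm_eq_abs]
              exact abs_of_nonneg (by linarith)
            rw [h1, h2]
            gcongr
            exact norm_charfun_le_one ν' s
        _ = a * b + (1 - a) := by ring
    have hfin : a * b + (1 - a) < 1 := by nlinarith
    refine lt_of_le_of_lt (ciSup_le (fun s => key s.1 s.2)) hfin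
end

section
/- Let ρ be a probability measure on ℝ of the form ρ = a·ρ_ac + b·ρ_d + c·ρ_s with a > 0, where ρ_ac has a density f with respect to Lebesgue measure. Then the law ν_ρ of (Z, Z²), where Z has law ρ, satisfies the two-dimensional Cramér condition: for every α > 0, sup_{‖(s,t)‖ ≥ α} |∫_ℝ e^{isz + itz²} dρ(z)| < 1. -/
open MeasureTheory Complex Filter Topology
open scoped ENNReal NNReal FourierTransform

noncomputable section

namespace CramerAux


noncomputable def phase (p : ℝ × ℝ) (z : ℝ) : ℂ :=
  Complex.exp (Complex.I * (p.1 * z + p.2 * z ^ 2))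

lemma norm_phase (p : ℝ × ℝ) (z : ℝ) : ‖phase p z‖ = 1 := by
  unfold phase
  rw [show (Complex.I * ((p.1:ℂ) * z + p.2 * z ^ 2)) = ((p.1 * z + p.2 * z ^ 2 : ℝ) : ℂ) * Complex.I by push_cast; ring]
  exact Complex.norm_exp_ofReal_mul_I _

lemma continuous_phase_z (p : ℝ × ℝ) : Continuous (phase p) := by unfold phase; fun_prop

lemma integrable_phase (μ : Measure ℝ) [IsFiniteMeasure μ] (p : ℝ × ℝ) : Integrable (phase p) μ :=
  (integrable_const (1:ℝ)).mono' ((continuous_phase_z p).aestronglyMeasurable)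
    (Filter.Eventually.of_forall fun z => le_of_eq (norm_phase p z))

noncomputable def cf (μ : Measure ℝ) (p : ℝ × ℝ) : ℂ := ∫ z, phase p z ∂μ

lemma norm_cf_le_one (μ : Measure ℝ) [IsProbabilityMeasure μ] (p : ℝ × ℝ) : ‖cf μ p‖ ≤ 1 := by
  calc ‖cf μ p‖ ≤ ∫ z, ‖phase p z‖ ∂μ := norm_integral_le_integral_norm _
  _ = 1 := by simp only [norm_phase]; simp

lemma finite_roots {s t : ℝ} (h : ¬(s = 0 ∧ t = 0)) (d : ℝ) :
    {z : ℝ | t * z ^ 2 + s * z = d}.Finite := by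
  have hp : (Polynomial.C t * Polynomial.X ^ 2 + Polynomial.C s * Polynomial.X
      - Polynomial.C d : Polynomial ℝ) ≠ 0 := by
    intro hzero
    have e0 := congrArg (Polynomial.eval 0) hzero
    have e1 := congrArg (Polynomial.eval 1) hzero
    have e2 := congrArg (Polynomial.eval (-1)) hzero
    simp at e0 e1 e2
    exact h ⟨by linarith, by linarith⟩
  refine (Polynomial.finite_setOf_isRoot hp).subset fun z hz => ?_
  simp only [Set.mem_setOf_eq, Polynomial.IsRoot, Polynomial.eval_sub, Polynomial.eval_add,
    Polynomial.eval_mul, Polynomial.eval_pow, Polynomial.eval_C, Polynomial.eval_X]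
  simp only [Set.mem_setOf_eq] at hz
  linarith

lemma norm_cf_lt_one (μ : Measure ℝ) [IsProbabilityMeasure μ] (hμ : μ ≪ (volume : Measure ℝ))
    {p : ℝ × ℝ} (hp : p ≠ 0) : ‖cf μ p‖ < 1 := by
  rcases lt_or_eq_of_le (norm_cf_le_one μ p) with h | h
  · exact h
  exfalso
  set c := cf μ p with hc
  have habs : ‖c‖ = 1 := h
  -- step 1 : a.e. phase p z = c
  have key : ∀ᵐ z ∂μ, phase p z = c := by
    have hint : Integrable (fun z => ((starRingEnd ℂ) c * phase p z)) μ :=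
      (integrable_phase μ p).const_mul _
    have h1 : ∫ z, (1 - ((starRingEnd ℂ) c * phase p z).re) ∂μ = 0 := by
      have hsubint : Integrable (fun z => ((starRingEnd ℂ) c * phase p z).re) μ := by
        simpa using hint.re
      rw [integral_sub (integrable_const 1) hsubint]
      have : ∫ z, ((starRingEnd ℂ) c * phase p z).re ∂μ
          = (∫ z, (starRingEnd ℂ) c * phase p z ∂μ).re := by
        simpa using integral_re hint
      rw [this, integral_const_mul]
      have : (starRingEnd ℂ) c * ∫ z, phase p z ∂μ = ((Complex.normSq c : ℝ) : ℂ) := by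
        rw [show (∫ z, phase p z ∂μ) = c from rfl, mul_comm, Complex.mul_conj]
      rw [this]
      simp [Complex.normSq_eq_norm_sq, habs]
    have hnonneg : 0 ≤ fun z => (1 - ((starRingEnd ℂ) c * phase p z).re) := by
      intro z
      have h2 : ((starRingEnd ℂ) c * phase p z).re ≤ 1 := by
        calc ((starRingEnd ℂ) c * phase p z).re ≤ ‖(starRingEnd ℂ) c * phase p z‖ :=
          Complex.re_le_norm _
        _ = 1 := by
          rw [norm_mul, Complex.norm_conj, habs]
          have := norm_phase p z
          rw [this, one_mul]
      simpa using h2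
    have := (integral_eq_zero_iff_of_nonneg hnonneg
      ((integrable_const (1:ℝ)).sub hint.re)).mp h1
    filter_upwards [this] with z hz
    simp only [Pi.zero_apply] at hz
    have hre : ((starRingEnd ℂ) c * phase p z).re = 1 := by linarith
    -- |w| = 1 and re w = 1 ⇒ w = 1
    have habsw : ‖(starRingEnd ℂ) c * phase p z‖ = 1 := by
      rw [norm_mul, Complex.norm_conj, habs]
      have := norm_phase p z
      rw [this, one_mul]
    have hw : (starRingEnd ℂ) c * phase p z = 1 := by
      have hnsq : Complex.normSq ((starRingEnd ℂ) c * phase p z) = 1 := by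
        rw [Complex.normSq_eq_norm_sq, habsw]; norm_num
      have him : ((starRingEnd ℂ) c * phase p z).im = 0 := by
        have := Complex.normSq_apply ((starRingEnd ℂ) c * phase p z)
        nlinarith [sq_nonneg (((starRingEnd ℂ) c * phase p z).im)]
      exact Complex.ext (by simpa using hre) (by simpa using him)
    calc phase p z = (c * (starRingEnd ℂ) c) * phase p z := by
          rw [Complex.mul_conj, Complex.normSq_eq_norm_sq, habs]; simp
    _ = c * ((starRingEnd ℂ) c * phase p z) := by ring
    _ = c := by rw [hw, mul_one]
  -- step 2 : the set where phase p z = c is volume-null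
  have hsub : {z : ℝ | phase p z = c} ⊆
      ⋃ n : ℤ, {z : ℝ | p.2 * z ^ 2 + p.1 * z = Complex.arg c + 2 * Real.pi * n} := by
    intro z hz
    simp only [Set.mem_setOf_eq] at hz
    have hcexp : c = Complex.exp ((Complex.arg c : ℂ) * Complex.I) := by
      conv_lhs => rw [← Complex.norm_mul_exp_arg_mul_I c]
      rw [habs]; simp
    rw [hcexp] at hz
    unfold phase at hz
    rw [Complex.exp_eq_exp_iff_exists_int] at hz
    obtain ⟨n, hn⟩ := hz
    have hn2 : ((p.1 * z + p.2 * z ^ 2 : ℝ) : ℂ) * Complex.I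
        = ((c.arg + 2 * Real.pi * n : ℝ) : ℂ) * Complex.I := by
      push_cast
      linear_combination hn
    have hn3 := mul_right_cancel₀ Complex.I_ne_zero hn2
    have hr : (p.1 * z + p.2 * z ^ 2 : ℝ) = c.arg + 2 * Real.pi * n := by exact_mod_cast hn3
    refine Set.mem_iUnion.mpr ⟨n, ?_⟩
    simp only [Set.mem_setOf_eq]
    linarith
  have hNnull : μ {z : ℝ | phase p z = c} = 0 := by
    refine measure_mono_null hsub (hμ ?_)
    refine Set.Countable.measure_zero ?_ _
    exact Set.countable_iUnion fun n => (finite_roots (fun h0 => hp (Prod.ext h0.1 h0.2)) _).countable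
  have h2 : μ {z : ℝ | phase p z ≠ c} = 0 := ae_iff.mp key
  have : (1 : ℝ≥0∞) ≤ 0 := by
    calc (1:ℝ≥0∞) = μ Set.univ := (measure_univ).symm
    _ ≤ μ {z : ℝ | phase p z = c} + μ {z : ℝ | phase p z ≠ c} := by
        rw [show (Set.univ : Set ℝ) = {z | phase p z = c} ∪ {z | phase p z ≠ c} by
          ext z; by_cases hzz : phase p z = c <;> simp [hzz]]
        exact measure_union_le _ _
    _ = 0 := by rw [hNnull, h2, add_zero]
  simp at this


lemma continuous_phase_p (z : ℝ) : Continuous fun p : ℝ × ℝ => phase p z := by unfold phase; fun_prop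

lemma continuous_cf (μ : Measure ℝ) [IsFiniteMeasure μ] : Continuous (cf μ) := by
  apply continuous_of_dominated (bound := fun _ => (1:ℝ))
  · exact fun p => (continuous_phase_z p).aestronglyMeasurable
  · exact fun p => Filter.Eventually.of_forall fun z => le_of_eq (norm_phase p z)
  · exact integrable_const 1
  · exact Filter.Eventually.of_forall fun z => continuous_phase_p z

lemma isFiniteMeasure_ofReal_smul (r : ℝ) (μ : Measure ℝ) [IsFiniteMeasure μ] :
    IsFiniteMeasure (ENNReal.ofReal r • μ) :=
  ⟨by rw [Measure.smul_apply, smul_eq_mul]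
      exact ENNReal.mul_lt_top ENNReal.ofReal_lt_top (measure_lt_top _ _)⟩

lemma norm_cf_decomp (ρ ρac ρd ρs : Measure ℝ)
    [IsProbabilityMeasure ρac] [IsProbabilityMeasure ρd] [IsProbabilityMeasure ρs]
    (a b c : ℝ) (ha : 0 ≤ a) (hb : 0 ≤ b) (hc : 0 ≤ c)
    (hdec : ρ = ENNReal.ofReal a • ρac + ENNReal.ofReal b • ρd + ENNReal.ofReal c • ρs)
    (p : ℝ × ℝ) :
    ‖cf ρ p‖ ≤ a * ‖cf ρac p‖ + b + c := by
  haveI := isFiniteMeasure_ofReal_smul a ρac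
  haveI := isFiniteMeasure_ofReal_smul b ρd
  haveI := isFiniteMeasure_ofReal_smul c ρs
  have h1 : cf ρ p = a • cf ρac p + b • cf ρd p + c • cf ρs p := by
    unfold cf
    rw [hdec, integral_add_measure (integrable_phase _ p) (integrable_phase _ p),
      integral_add_measure (integrable_phase _ p) (integrable_phase _ p),
      integral_smul_measure, integral_smul_measure, integral_smul_measure,
      ENNReal.toReal_ofReal ha, ENNReal.toReal_ofReal hb, ENNReal.toReal_ofReal hc]
  rw [h1]
  calc ‖a • cf ρac p + b • cf ρd p + c • cf ρs p‖
      ≤ ‖a • cf ρac p‖ + ‖b • cf ρd p‖ + ‖c • cf ρs p‖ :=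
        (norm_add_le _ _).trans (by gcongr; exact norm_add_le _ _)
    _ = a * ‖cf ρac p‖ + b * ‖cf ρd p‖ + c * ‖cf ρs p‖ := by
        rw [norm_smul, norm_smul, norm_smul]
        simp [_root_.abs_of_nonneg ha, _root_.abs_of_nonneg hb, _root_.abs_of_nonneg hc]
    _ ≤ a * ‖cf ρac p‖ + b * 1 + c * 1 := by
        gcongr
        · exact norm_cf_le_one _ p
        · exact norm_cf_le_one _ p
    _ = a * ‖cf ρac p‖ + b + c := by ring


def T : ℝ × ℝ → ℝ × ℝ := fun q => (q.1 - q.2, q.1 ^ 2 - q.2 ^ 2)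

lemma continuous_T : Continuous T := by unfold T; fun_prop

def Tderiv (q : ℝ × ℝ) : (ℝ × ℝ) →L[ℝ] (ℝ × ℝ) :=
  (ContinuousLinearMap.fst ℝ ℝ ℝ - ContinuousLinearMap.snd ℝ ℝ ℝ).prod
    ((2 * q.1) • ContinuousLinearMap.fst ℝ ℝ ℝ - (2 * q.2) • ContinuousLinearMap.snd ℝ ℝ ℝ)

lemma hasFDerivAt_T (q : ℝ × ℝ) : HasFDerivAt T (Tderiv q) q := by
  have h1 : HasFDerivAt (fun q : ℝ × ℝ => q.1 - q.2)
      (ContinuousLinearMap.fst ℝ ℝ ℝ - ContinuousLinearMap.snd ℝ ℝ ℝ) q :=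
    (hasFDerivAt_fst).sub (hasFDerivAt_snd)
  have h2 : HasFDerivAt (fun q : ℝ × ℝ => q.1 ^ 2 - q.2 ^ 2)
      ((2 * q.1) • ContinuousLinearMap.fst ℝ ℝ ℝ - (2 * q.2) • ContinuousLinearMap.snd ℝ ℝ ℝ) q := by
    have ha : HasFDerivAt (fun q : ℝ × ℝ => q.1 * q.1)
        (q.1 • ContinuousLinearMap.fst ℝ ℝ ℝ + q.1 • ContinuousLinearMap.fst ℝ ℝ ℝ) q :=
      hasFDerivAt_fst.mul hasFDerivAt_fst
    have hb : HasFDerivAt (fun q : ℝ × ℝ => q.2 * q.2)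
        (q.2 • ContinuousLinearMap.snd ℝ ℝ ℝ + q.2 • ContinuousLinearMap.snd ℝ ℝ ℝ) q :=
      hasFDerivAt_snd.mul hasFDerivAt_snd
    have := ha.sub hb
    refine (this.congr_fderiv ?_).congr_of_eventuallyEq (Filter.Eventually.of_forall fun q' => ?_)
    · ext <;> simp [two_mul]
    · simp [sq]
  exact HasFDerivAt.prodMk h1 h2

lemma det_Tderiv (q : ℝ × ℝ) : (Tderiv q).det = 2 * q.1 - 2 * q.2 := by
  have : LinearMap.toMatrix (Module.Basis.finTwoProd ℝ) (Module.Basis.finTwoProd ℝ)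
      ((Tderiv q) : (ℝ × ℝ) →ₗ[ℝ] (ℝ × ℝ)) = !![(1:ℝ), -1; 2*q.1, -(2*q.2)] := by
    ext i j
    fin_cases i <;> fin_cases j <;>
      simp [LinearMap.toMatrix_apply, Module.Basis.finTwoProd_zero, Module.Basis.finTwoProd_one,
        Module.Basis.coe_finTwoProd_repr, Tderiv]
  show LinearMap.det _ = _
  rw [← LinearMap.det_toMatrix (Module.Basis.finTwoProd ℝ), this, Matrix.det_fin_two_of]
  ring

lemma diag_null : (volume : Measure (ℝ × ℝ)) {q : ℝ × ℝ | q.1 = q.2} = 0 := by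
  have hmeas : MeasurableSet {q : ℝ × ℝ | q.1 = q.2} :=
    measurableSet_eq_fun measurable_fst measurable_snd
  rw [show (volume : Measure (ℝ × ℝ)) = (volume : Measure ℝ).prod volume from rfl,
    Measure.prod_apply hmeas]
  have : ∀ z : ℝ, (Prod.mk z ⁻¹' {q : ℝ × ℝ | q.1 = q.2}) = {z} := by
    intro z; ext w; simp [eq_comm]
  simp [this]

lemma injOn_T_pos : Set.InjOn T {q : ℝ × ℝ | q.2 < q.1} := by
  intro q hq q' hq' h
  simp only [Set.mem_setOf_eq] at hq hq'
  unfold T at h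
  have h1 : q.1 - q.2 = q'.1 - q'.2 := congrArg Prod.fst h
  have h2 : q.1 ^ 2 - q.2 ^ 2 = q'.1 ^ 2 - q'.2 ^ 2 := congrArg Prod.snd h
  have hx : 0 < q.1 - q.2 := by linarith
  have hsum : q.1 + q.2 = q'.1 + q'.2 := by
    have expand : (q.1 - q.2) * (q.1 + q.2) = (q.1 - q.2) * (q'.1 + q'.2) := by
      nlinarith [h1, h2]
    exact mul_left_cancel₀ (ne_of_gt hx) expand
  exact Prod.ext (by linarith) (by linarith)

lemma injOn_T_neg : Set.InjOn T {q : ℝ × ℝ | q.1 < q.2} := by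
  intro q hq q' hq' h
  simp only [Set.mem_setOf_eq] at hq hq'
  unfold T at h
  have h1 : q.1 - q.2 = q'.1 - q'.2 := congrArg Prod.fst h
  have h2 : q.1 ^ 2 - q.2 ^ 2 = q'.1 ^ 2 - q'.2 ^ 2 := congrArg Prod.snd h
  have hx : q.1 - q.2 < 0 := by linarith
  have hsum : q.1 + q.2 = q'.1 + q'.2 := by
    have expand : (q.1 - q.2) * (q.1 + q.2) = (q.1 - q.2) * (q'.1 + q'.2) := by
      nlinarith [h1, h2]
    exact mul_left_cancel₀ (ne_of_lt hx) expand
  exact Prod.ext (by linarith) (by linarith)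

lemma preimage_piece_null {S : Set (ℝ × ℝ)} (hS : MeasurableSet S) (hS0 : volume S = 0)
    {U : Set (ℝ × ℝ)} (hU : MeasurableSet U) (hUne : ∀ q ∈ U, q.1 ≠ q.2)
    (hinj : Set.InjOn T U) : volume (T ⁻¹' S ∩ U) = 0 := by
  set A := T ⁻¹' S ∩ U with hA
  have hAm : MeasurableSet A := (continuous_T.measurable hS).inter hU
  have h1 : (∫⁻ x in A, ENNReal.ofReal |(Tderiv x).det| ∂volume) = volume (T '' A) :=
    lintegral_abs_det_fderiv_eq_addHaar_image volume hAm
      (fun x _ => (hasFDerivAt_T x).hasFDerivWithinAt) (hinj.mono Set.inter_subset_right)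
  have h2 : volume (T '' A) = 0 :=
    measure_mono_null (by rintro y ⟨x, ⟨hx1, _⟩, rfl⟩; exact hx1) hS0
  have h3 : (∫⁻ x in A, ENNReal.ofReal |2 * x.1 - 2 * x.2| ∂volume) = 0 := by
    have hcongr : (∫⁻ x in A, ENNReal.ofReal |2 * x.1 - 2 * x.2| ∂volume)
        = ∫⁻ x in A, ENNReal.ofReal |(Tderiv x).det| ∂volume := by
      apply lintegral_congr; intro x; rw [det_Tderiv]
    rw [hcongr, h1, h2]
  have hfm : Measurable fun x : ℝ × ℝ => ENNReal.ofReal |2 * x.1 - 2 * x.2| := by fun_prop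
  have h4 := (lintegral_eq_zero_iff hfm).mp h3
  have h5 : A ⊆ {x : ℝ × ℝ | ENNReal.ofReal |2 * x.1 - 2 * x.2| ≠ 0} := by
    intro x hx
    have hne : x.1 ≠ x.2 := hUne x hx.2
    simp only [Set.mem_setOf_eq, ne_eq, ENNReal.ofReal_eq_zero, not_le]
    have : 2 * x.1 - 2 * x.2 ≠ 0 := by
      intro h0; exact hne (by linarith)
    positivity
  refine le_antisymm ?_ zero_le
  calc volume A = (volume.restrict A) A := (Measure.restrict_apply_self _ _).symm
    _ ≤ (volume.restrict A) {x : ℝ × ℝ | ENNReal.ofReal |2 * x.1 - 2 * x.2| ≠ 0} :=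
        measure_mono h5
    _ = 0 := by
        have := ae_iff.mp h4
        simpa using this

lemma map_T_ac (μ : Measure ℝ) [SFinite μ] (hμ : μ ≪ (volume : Measure ℝ)) :
    (μ.prod μ).map T ≪ (volume : Measure (ℝ × ℝ)) := by
  refine Measure.AbsolutelyContinuous.mk fun S hS hS0 => ?_
  rw [Measure.map_apply continuous_T.measurable hS]
  have hprod : μ.prod μ ≪ (volume : Measure (ℝ × ℝ)) := by
    rw [show (volume : Measure (ℝ × ℝ)) = (volume : Measure ℝ).prod volume from rfl]
    exact hμ.prod hμ
  refine hprod ?_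
  have hsub : T ⁻¹' S ⊆ (T ⁻¹' S ∩ {q : ℝ × ℝ | q.2 < q.1}) ∪
      ((T ⁻¹' S ∩ {q : ℝ × ℝ | q.1 < q.2}) ∪ {q : ℝ × ℝ | q.1 = q.2}) := by
    intro q hq
    rcases lt_trichotomy q.1 q.2 with h | h | h
    · exact Or.inr (Or.inl ⟨hq, h⟩)
    · exact Or.inr (Or.inr h)
    · exact Or.inl ⟨hq, h⟩
  refine measure_mono_null hsub ?_
  refine measure_union_null ?_ (measure_union_null ?_ diag_null)
  · exact preimage_piece_null hS hS0 (measurableSet_lt measurable_snd measurable_fst)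
      (fun q hq => ne_of_gt hq) injOn_T_pos
  · exact preimage_piece_null hS hS0 (measurableSet_lt measurable_fst measurable_snd)
      (fun q hq => ne_of_lt hq) injOn_T_neg

lemma cf_mul_conj (μ : Measure ℝ) [IsProbabilityMeasure μ] (p : ℝ × ℝ) :
    cf μ p * (starRingEnd ℂ) (cf μ p)
      = ∫ x, Complex.exp (Complex.I * (p.1 * x.1 + p.2 * x.2)) ∂((μ.prod μ).map T) := by
  have hcont : Continuous fun x : ℝ × ℝ => Complex.exp (Complex.I * (p.1 * x.1 + p.2 * x.2)) := by
    fun_prop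
  rw [integral_map continuous_T.measurable.aemeasurable hcont.aestronglyMeasurable]
  unfold cf
  rw [← integral_conj, ← integral_prod_mul]
  apply integral_congr_ae
  apply Filter.Eventually.of_forall
  intro q
  unfold phase T
  simp only
  rw [← Complex.exp_conj, ← Complex.exp_add]
  congr 1
  simp only [map_mul, map_add, Complex.conj_I, Complex.conj_ofReal, map_pow]
  push_cast
  ring


def Ψ : (ℝ × ℝ) →ₗ[ℝ] ((ℝ × ℝ) →L[ℝ] ℝ) where
  toFun p := (-(1/(2*Real.pi)) * p.1) • ContinuousLinearMap.fst ℝ ℝ ℝ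
    + (-(1/(2*Real.pi)) * p.2) • ContinuousLinearMap.snd ℝ ℝ ℝ
  map_add' p q := by
    refine ContinuousLinearMap.ext fun v => ?_
    simp only [ContinuousLinearMap.add_apply, ContinuousLinearMap.smul_apply,
      ContinuousLinearMap.coe_fst', ContinuousLinearMap.coe_snd', Prod.fst_add, Prod.snd_add,
      smul_eq_mul]
    ring
  map_smul' r p := by
    refine ContinuousLinearMap.ext fun v => ?_
    simp only [ContinuousLinearMap.add_apply, ContinuousLinearMap.smul_apply,
      ContinuousLinearMap.coe_fst', ContinuousLinearMap.coe_snd', Prod.smul_fst, Prod.smul_snd,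
      smul_eq_mul, RingHom.id_apply]
    ring

lemma Ψ_apply (p v : ℝ × ℝ) :
    Ψ p v = -(1/(2*Real.pi)) * p.1 * v.1 + -(1/(2*Real.pi)) * p.2 * v.2 := by
  simp [Ψ, mul_assoc]

lemma ker_Ψ : LinearMap.ker Ψ = ⊥ := by
  rw [LinearMap.ker_eq_bot']
  intro p hp
  have h1 : Ψ p (1, 0) = 0 := by rw [hp]; rfl
  have h2 : Ψ p (0, 1) = 0 := by rw [hp]; rfl
  rw [Ψ_apply] at h1 h2
  simp only [mul_one, mul_zero, add_zero, zero_add] at h1 h2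
  have hπ : Real.pi ≠ 0 := Real.pi_ne_zero
  have hp1 : p.1 = 0 := by
    field_simp at h1
    linarith
  have hp2 : p.2 = 0 := by
    field_simp at h2
    linarith
  exact Prod.ext hp1 hp2

lemma decay (μ : Measure ℝ) [IsProbabilityMeasure μ] (hμ : μ ≪ (volume : Measure ℝ)) :
    ∃ R : ℝ, ∀ p : ℝ × ℝ, R ≤ ‖p‖ → ‖cf μ p‖ ≤ 3/4 := by
  set ν := (μ.prod μ).map T with hνdef
  haveI : IsProbabilityMeasure ν := Measure.isProbabilityMeasure_map continuous_T.measurable.aemeasurable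
  have hν : ν ≪ (volume : Measure (ℝ × ℝ)) := map_T_ac μ hμ
  set g : ℝ × ℝ → ℝ≥0 := fun x => (ν.rnDeriv volume x).toNNReal with hg
  have hgm : Measurable g := (Measure.measurable_rnDeriv ν volume).ennreal_toNNReal
  have hνd : (volume : Measure (ℝ × ℝ)).withDensity (fun x => (g x : ℝ≥0∞)) = ν := by
    have hae : (fun x => (g x : ℝ≥0∞)) =ᵐ[(volume : Measure (ℝ × ℝ))] ν.rnDeriv volume := by
      filter_upwards [Measure.rnDeriv_lt_top ν volume] with x hx
      simp [hg, ENNReal.coe_toNNReal hx.ne]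
    rw [withDensity_congr_ae hae, Measure.withDensity_rnDeriv_eq ν volume hν]
  have hint : ∀ p : ℝ × ℝ, (∫ x, Complex.exp (Complex.I * (p.1 * x.1 + p.2 * x.2)) ∂ν)
      = ∫ x, 𝐞 (-(Ψ p) x) • ((g x : ℝ) : ℂ) ∂(volume : Measure (ℝ × ℝ)) := by
    intro p
    rw [← hνd, integral_withDensity_eq_integral_smul hgm]
    apply integral_congr_ae
    apply Filter.Eventually.of_forall
    intro x
    have he : 𝐞 (-(Ψ p) x) = (Complex.exp (Complex.I * (p.1 * x.1 + p.2 * x.2)) : ℂ) := by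
      rw [Real.fourierChar_apply, Ψ_apply]
      push_cast
      congr 1
      have hπ : (Real.pi : ℂ) ≠ 0 := by exact_mod_cast Real.pi_ne_zero
      field_simp
      ring
    simp only
    rw [Circle.smul_def, he]
    simp only [NNReal.smul_def, Complex.real_smul]
    rw [smul_eq_mul]
    ring
  have hRL := tendsto_integral_exp_smul_cocompact
    (fun x : ℝ × ℝ => ((g x : ℝ) : ℂ)) (volume : Measure (ℝ × ℝ))
  have hcc : Tendsto Ψ (cocompact (ℝ × ℝ)) (cocompact ((ℝ × ℝ) →L[ℝ] ℝ)) :=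
    (LinearMap.isClosedEmbedding_of_injective ker_Ψ).tendsto_cocompact
  have h2 := hRL.comp hcc
  have h3 : Tendsto (fun p : ℝ × ℝ => cf μ p * (starRingEnd ℂ) (cf μ p))
      (cocompact (ℝ × ℝ)) (𝓝 0) := by
    have : (fun p : ℝ × ℝ => cf μ p * (starRingEnd ℂ) (cf μ p))
        = fun p : ℝ × ℝ => ∫ x, 𝐞 (-(Ψ p) x) • ((g x : ℝ) : ℂ) ∂(volume : Measure (ℝ × ℝ)) := by
      funext p
      rw [cf_mul_conj μ p, ← hνdef, hint p]
    rw [this]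
    exact h2
  have hev : ∀ᶠ p : ℝ × ℝ in cocompact (ℝ × ℝ),
      ‖cf μ p * (starRingEnd ℂ) (cf μ p)‖ < 1/2 := by
    have := Metric.tendsto_nhds.mp h3 (1/2) (by norm_num)
    filter_upwards [this] with p hp
    rwa [dist_zero_right] at hp
  rw [Filter.hasBasis_cocompact.eventually_iff] at hev
  obtain ⟨K, hK, hKsub⟩ := hev
  obtain ⟨r, hr⟩ := hK.isBounded.subset_closedBall 0
  refine ⟨r + 1, fun p hp => ?_⟩
  have hpK : p ∈ Kᶜ := by
    intro hmem
    have := hr hmem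
    rw [Metric.mem_closedBall, dist_zero_right] at this
    linarith
  have hlt : ‖cf μ p * (starRingEnd ℂ) (cf μ p)‖ < 1/2 := hKsub hpK
  rw [norm_mul, RCLike.norm_conj] at hlt
  nlinarith [norm_nonneg (cf μ p)]

end CramerAux

open CramerAux

theorem cramer_condition_for_Z_Zsq
    (ρ ρac ρd ρs : Measure ℝ)
    [IsProbabilityMeasure ρ] [IsProbabilityMeasure ρac]
    [IsProbabilityMeasure ρd] [IsProbabilityMeasure ρs]
    (a b c : ℝ) (ha : 0 < a) (hb : 0 ≤ b) (hc : 0 ≤ c) (habc : a + b + c = 1)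
    (hdec : ρ = ENNReal.ofReal a • ρac + ENNReal.ofReal b • ρd + ENNReal.ofReal c • ρs)
    (hac : ρac ≪ (volume : Measure ℝ)) :
    ∀ α : ℝ, 0 < α →
      (⨆ p : {p : ℝ × ℝ // α ≤ ‖p‖},
        ‖∫ z, Complex.exp (Complex.I * (p.1.1 * z + p.1.2 * z ^ 2)) ∂ρ‖) < 1 := by
  intro α hα
  obtain ⟨R₀, hR₀⟩ := decay ρac hac
  set R := max R₀ α with hRdef
  have hRα : α ≤ R := le_max_right _ _
  have hRpos : 0 < R := lt_of_lt_of_le hα hRα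
  set K := {p : ℝ × ℝ | α ≤ ‖p‖ ∧ ‖p‖ ≤ R} with hKdef
  have hKc : IsCompact K := by
    have hclosed : IsClosed K := by
      have : K = (fun p : ℝ × ℝ => ‖p‖) ⁻¹' (Set.Icc α R) := by
        ext p; simp [hKdef, Set.mem_Icc]
      rw [this]
      exact (isClosed_Icc).preimage continuous_norm
    have hbdd : Bornology.IsBounded K := by
      apply Bornology.IsBounded.subset (Metric.isBounded_closedBall (x := (0 : ℝ × ℝ)) (r := R))
      intro p hp
      rw [Metric.mem_closedBall, dist_zero_right]
      exact hp.2
    exact Metric.isCompact_of_isClosed_isBounded hclosed hbdd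
  have hKne : K.Nonempty := by
    refine ⟨(R, 0), ?_, ?_⟩
    · rw [Prod.norm_def]
      simp [Real.norm_eq_abs, abs_of_pos hRpos, le_max_iff]
      left; exact hRα
    · rw [Prod.norm_def]
      simp [Real.norm_eq_abs, abs_of_pos hRpos]
      exact hRpos.le
  obtain ⟨p₀, hp₀K, hp₀max⟩ := hKc.exists_isMaxOn hKne
    ((continuous_norm.comp (continuous_cf ρac)).continuousOn)
  have hp₀ne : p₀ ≠ 0 := by
    intro h0
    have := hp₀K.1
    rw [h0] at this
    simp at this
    linarith
  set M := ‖cf ρac p₀‖ with hM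
  have hM1 : M < 1 := norm_cf_lt_one ρac hac hp₀ne
  set B := max M (3/4 : ℝ) with hB
  have hB1 : B < 1 := max_lt hM1 (by norm_num)
  have hBnn : 0 ≤ B := le_trans (by norm_num) (le_max_right _ _)
  have hBall : ∀ p : ℝ × ℝ, α ≤ ‖p‖ → ‖cf ρac p‖ ≤ B := by
    intro p hp
    rcases le_total ‖p‖ R with h | h
    · exact le_trans (hp₀max ⟨hp, h⟩) (le_max_left _ _)
    · exact le_trans (hR₀ p (le_trans (le_max_left _ _) h)) (le_max_right _ _)
  have key : ∀ p : {p : ℝ × ℝ // α ≤ ‖p‖},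
      ‖∫ z, Complex.exp (Complex.I * (p.1.1 * z + p.1.2 * z ^ 2)) ∂ρ‖ ≤ a * B + b + c := by
    intro p
    have h1 : ‖cf ρ p.1‖ ≤ a * ‖cf ρac p.1‖ + b + c :=
      norm_cf_decomp ρ ρac ρd ρs a b c ha.le hb hc hdec p.1
    have h2 : ‖cf ρac p.1‖ ≤ B := hBall p.1 p.2
    have : ‖cf ρ p.1‖ ≤ a * B + b + c := by nlinarith
    exact this
  haveI : Nonempty {p : ℝ × ℝ // α ≤ ‖p‖} := by
    refine ⟨⟨(α, 0), ?_⟩⟩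
    rw [Prod.norm_def]
    simp [Real.norm_eq_abs, abs_of_pos hα]
  have hsup := ciSup_le key
  refine lt_of_le_of_lt hsup ?_
  nlinarith

end
end

section
/- Let ρ_ac be a probability measure on ℝ with density f, and let ν_{ρ_ac} be the law of (Z, Z²) for Z ~ ρ_ac. Then the convolution ν_{ρ_ac}^{*2} is absolutely continuous with respect to Lebesgue measure on ℝ², with density f₂(x,y) = (2y − x²)^{−1/2} · f((x + √(2y − x²))/2) · f((x − √(2y − x²))/2) · 1_{x² < 2y}. -/
open MeasureTheory Real ContinuousLinearMap Set

noncomputable def Tmap : ℝ × ℝ → ℝ × ℝ := fun p => (p.1 + p.2, p.1 ^ 2 + p.2 ^ 2)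

noncomputable def Tder (p : ℝ × ℝ) : (ℝ × ℝ) →L[ℝ] (ℝ × ℝ) :=
  ((fst ℝ ℝ ℝ) + (snd ℝ ℝ ℝ)).prod ((2 * p.1) • (fst ℝ ℝ ℝ) + (2 * p.2) • (snd ℝ ℝ ℝ))

theorem hasFDeriv_T (p : ℝ × ℝ) : HasFDerivAt Tmap (Tder p) p := by
  have h1 : HasFDerivAt (fun p : ℝ × ℝ => p.1 + p.2) ((fst ℝ ℝ ℝ) + (snd ℝ ℝ ℝ)) p :=
    (hasFDerivAt_fst).add (hasFDerivAt_snd)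
  have h2 : HasFDerivAt (fun p : ℝ × ℝ => p.1 ^ 2 + p.2 ^ 2)
      ((2 * p.1) • (fst ℝ ℝ ℝ) + (2 * p.2) • (snd ℝ ℝ ℝ)) p := by
    have := ((hasFDerivAt_fst (𝕜 := ℝ) (p := p)).mul (hasFDerivAt_fst (𝕜 := ℝ) (p := p))).add
      ((hasFDerivAt_snd (𝕜 := ℝ) (p := p)).mul (hasFDerivAt_snd (𝕜 := ℝ) (p := p)))
    have e1 : (fun p : ℝ × ℝ => p.1 ^ 2 + p.2 ^ 2) = Prod.fst * Prod.fst + Prod.snd * Prod.snd := by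
      funext q; simp [pow_two]
    have e2 : (2 * p.1) • fst ℝ ℝ ℝ + (2 * p.2) • snd ℝ ℝ ℝ
        = p.1 • fst ℝ ℝ ℝ + p.1 • fst ℝ ℝ ℝ + (p.2 • snd ℝ ℝ ℝ + p.2 • snd ℝ ℝ ℝ) := by
      rw [two_mul, two_mul, add_smul, add_smul]
    rw [e1, e2]; exact this
  exact h1.prodMk h2

theorem det_Tder (p : ℝ × ℝ) : (Tder p).det = 2 * p.2 - 2 * p.1 := by
  have h : (Tder p).det = LinearMap.det ((Tder p) : (ℝ × ℝ) →ₗ[ℝ] (ℝ × ℝ)) := rfl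
  rw [h, ← LinearMap.det_toMatrix (Module.Basis.finTwoProd ℝ), Matrix.det_fin_two]
  simp [LinearMap.toMatrix_apply, Tder]

theorem Tmap_measurable : Measurable Tmap := by
  unfold Tmap; fun_prop

theorem inj_lt : Set.InjOn Tmap {p : ℝ × ℝ | p.1 < p.2} := by
  rintro ⟨a, b⟩ hab ⟨c, d⟩ hcd h
  simp only [Tmap, Prod.mk.injEq] at h
  obtain ⟨h1, h2⟩ := h
  simp only [mem_setOf_eq] at hab hcd
  have h1sq : (a + b) ^ 2 = (c + d) ^ 2 := by rw [h1]
  have h3 : (b - a - (d - c)) * (b - a + (d - c)) = 0 := by nlinarith [h1sq, h2]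
  have h4 : 0 < b - a + (d - c) := by linarith
  have key : b - a = d - c := by
    rcases mul_eq_zero.1 h3 with h | h
    · linarith
    · linarith
  have hac : a = c := by linarith
  have hbd : b = d := by linarith
  simp_all

theorem inj_gt : Set.InjOn Tmap {p : ℝ × ℝ | p.2 < p.1} := by
  rintro ⟨a, b⟩ hab ⟨c, d⟩ hcd h
  simp only [Tmap, Prod.mk.injEq] at h
  obtain ⟨h1, h2⟩ := h
  simp only [mem_setOf_eq] at hab hcd
  have h1sq : (a + b) ^ 2 = (c + d) ^ 2 := by rw [h1]
  have h3 : (a - b - (c - d)) * (a - b + (c - d)) = 0 := by nlinarith [h1sq, h2]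
  have h4 : 0 < a - b + (c - d) := by linarith
  have key : a - b = c - d := by
    rcases mul_eq_zero.1 h3 with h | h
    · linarith
    · linarith
  have hac : a = c := by linarith
  have hbd : b = d := by linarith
  simp_all

theorem mem_U_of_ne {p : ℝ × ℝ} (h : p.1 ≠ p.2) : (Tmap p).1 ^ 2 < 2 * (Tmap p).2 := by
  simp only [Tmap]
  have h2 : (p.1 - p.2) ^ 2 ≠ 0 := pow_ne_zero _ (sub_ne_zero.2 h)
  have h3 : 0 < (p.1 - p.2) ^ 2 := lt_of_le_of_ne (sq_nonneg _) (Ne.symm h2)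
  nlinarith [h3]

theorem preim_mem_lt {q : ℝ × ℝ} (hq : q.1 ^ 2 < 2 * q.2) :
    ((q.1 - Real.sqrt (2 * q.2 - q.1 ^ 2)) / 2, (q.1 + Real.sqrt (2 * q.2 - q.1 ^ 2)) / 2)
      ∈ {p : ℝ × ℝ | p.1 < p.2} ∧
    Tmap ((q.1 - Real.sqrt (2 * q.2 - q.1 ^ 2)) / 2, (q.1 + Real.sqrt (2 * q.2 - q.1 ^ 2)) / 2) = q := by
  have hpos : 0 < 2 * q.2 - q.1 ^ 2 := by linarith
  have hs : 0 < Real.sqrt (2 * q.2 - q.1 ^ 2) := Real.sqrt_pos.2 hpos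
  have hsq : (Real.sqrt (2 * q.2 - q.1 ^ 2)) ^ 2 = 2 * q.2 - q.1 ^ 2 := Real.sq_sqrt hpos.le
  obtain ⟨q1, q2⟩ := q
  constructor
  · simp only [mem_setOf_eq]; linarith
  · simp only [Tmap, Prod.mk.injEq]
    constructor
    · ring
    · simp only at hsq hpos ⊢; nlinarith [hsq]

theorem image_lt (s : Set (ℝ × ℝ)) :
    Tmap '' (Tmap ⁻¹' s ∩ {p : ℝ × ℝ | p.1 < p.2}) = s ∩ {q : ℝ × ℝ | q.1 ^ 2 < 2 * q.2} := by
  ext q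
  constructor
  · rintro ⟨p, ⟨hps, hplt⟩, rfl⟩
    exact ⟨hps, mem_U_of_ne (ne_of_lt hplt)⟩
  · rintro ⟨hqs, hqU⟩
    obtain ⟨hmem, heq⟩ := preim_mem_lt hqU
    exact ⟨_, ⟨by simp [Set.mem_preimage, heq, hqs], hmem⟩, heq⟩

theorem image_gt (s : Set (ℝ × ℝ)) :
    Tmap '' (Tmap ⁻¹' s ∩ {p : ℝ × ℝ | p.2 < p.1}) = s ∩ {q : ℝ × ℝ | q.1 ^ 2 < 2 * q.2} := by
  ext q
  constructor
  · rintro ⟨p, ⟨hps, hplt⟩, rfl⟩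
    exact ⟨hps, mem_U_of_ne (ne_of_gt hplt)⟩
  · rintro ⟨hqs, hqU⟩
    obtain ⟨hmem, heq⟩ := preim_mem_lt hqU
    refine ⟨(((q.1 + Real.sqrt (2 * q.2 - q.1 ^ 2)) / 2, (q.1 - Real.sqrt (2 * q.2 - q.1 ^ 2)) / 2)), ⟨?_, ?_⟩, ?_⟩
    · have h2 : Tmap ((q.1 + Real.sqrt (2 * q.2 - q.1 ^ 2)) / 2, (q.1 - Real.sqrt (2 * q.2 - q.1 ^ 2)) / 2) = q := by
        have hpos : 0 < 2 * q.2 - q.1 ^ 2 := by simpa using hqU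
        have hsq : (Real.sqrt (2 * q.2 - q.1 ^ 2)) ^ 2 = 2 * q.2 - q.1 ^ 2 := Real.sq_sqrt hpos.le
        obtain ⟨q1, q2⟩ := q
        simp only [Tmap, Prod.mk.injEq]
        simp only at hsq
        refine ⟨by ring, by nlinarith [hsq]⟩
      simp [Set.mem_preimage, h2, hqs]
    · simp only [mem_setOf_eq] at hmem ⊢; linarith [hmem]
    · have hpos : 0 < 2 * q.2 - q.1 ^ 2 := by simpa using hqU
      have hsq : (Real.sqrt (2 * q.2 - q.1 ^ 2)) ^ 2 = 2 * q.2 - q.1 ^ 2 := Real.sq_sqrt hpos.le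
      obtain ⟨q1, q2⟩ := q
      simp only [Tmap, Prod.mk.injEq]
      simp only at hsq
      refine ⟨by ring, by nlinarith [hsq]⟩

theorem diag_null : (volume : Measure (ℝ × ℝ)) {p : ℝ × ℝ | p.1 = p.2} = 0 := by
  have hm : MeasurableSet {p : ℝ × ℝ | p.1 = p.2} :=
    measurableSet_eq_fun measurable_fst measurable_snd
  rw [Measure.volume_eq_prod, Measure.prod_apply hm]
  have : ∀ x : ℝ, (volume : Measure ℝ) (Prod.mk x ⁻¹' {p : ℝ × ℝ | p.1 = p.2}) = 0 := by
    intro x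
    have : Prod.mk x ⁻¹' {p : ℝ × ℝ | p.1 = p.2} = {x} := by
      ext y; simp [eq_comm]
    rw [this]; exact measure_singleton x
  simp [this]

noncomputable def Fdens (f : ℝ → ℝ) : ℝ × ℝ → ENNReal := fun q =>
  ENNReal.ofReal
    (if q.1 ^ 2 < 2 * q.2 then
      (Real.sqrt (2 * q.2 - q.1 ^ 2))⁻¹
        * f ((q.1 + Real.sqrt (2 * q.2 - q.1 ^ 2)) / 2)
        * f ((q.1 - Real.sqrt (2 * q.2 - q.1 ^ 2)) / 2)
    else 0)

theorem mem_U_of_ne' {p : ℝ × ℝ} (h : p.1 ≠ p.2) : (p.1 + p.2) ^ 2 < 2 * (p.1 ^ 2 + p.2 ^ 2) := by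
  have h2 : (p.1 - p.2) ^ 2 ≠ 0 := pow_ne_zero _ (sub_ne_zero.2 h)
  have h3 : 0 < (p.1 - p.2) ^ 2 := lt_of_le_of_ne (sq_nonneg _) (Ne.symm h2)
  nlinarith [h3]

theorem dens_comp_lt (f : ℝ → ℝ) {p : ℝ × ℝ} (h : p.1 < p.2) :
    ENNReal.ofReal |2 * p.2 - 2 * p.1| * Fdens f (Tmap p)
      = 2 * ENNReal.ofReal (f p.1 * f p.2) := by
  obtain ⟨a, b⟩ := p
  simp only at h
  have hU : (a + b) ^ 2 < 2 * (a ^ 2 + b ^ 2) := mem_U_of_ne' (p := (a, b)) (ne_of_lt h)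
  have hsub : 2 * (a ^ 2 + b ^ 2) - (a + b) ^ 2 = (b - a) ^ 2 := by ring
  have hsqrt : Real.sqrt (2 * (a ^ 2 + b ^ 2) - (a + b) ^ 2) = b - a := by
    rw [hsub, Real.sqrt_sq (by linarith)]
  have hne : b - a ≠ 0 := by intro hc; linarith [sub_eq_zero.1 hc]
  simp only [Fdens, Tmap, if_pos hU, hsqrt]
  have h1 : (a + b + (b - a)) / 2 = b := by ring
  have h2 : (a + b - (b - a)) / 2 = a := by ring
  rw [h1, h2, abs_of_pos (by linarith)]
  rw [← ENNReal.ofReal_mul (by linarith)]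
  have hcalc : (2 * b - 2 * a) * ((b - a)⁻¹ * f b * f a) = 2 * (f a * f b) := by
    field_simp
  rw [hcalc, ENNReal.ofReal_mul (by norm_num)]
  norm_num

theorem dens_comp_gt (f : ℝ → ℝ) {p : ℝ × ℝ} (h : p.2 < p.1) :
    ENNReal.ofReal |2 * p.2 - 2 * p.1| * Fdens f (Tmap p)
      = 2 * ENNReal.ofReal (f p.1 * f p.2) := by
  obtain ⟨a, b⟩ := p
  simp only at h
  have hU : (a + b) ^ 2 < 2 * (a ^ 2 + b ^ 2) := mem_U_of_ne' (p := (a, b)) (ne_of_gt h)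
  have hsub : 2 * (a ^ 2 + b ^ 2) - (a + b) ^ 2 = (a - b) ^ 2 := by ring
  have hsqrt : Real.sqrt (2 * (a ^ 2 + b ^ 2) - (a + b) ^ 2) = a - b := by
    rw [hsub, Real.sqrt_sq (by linarith)]
  have hne : a - b ≠ 0 := by intro hc; linarith [sub_eq_zero.1 hc]
  simp only [Fdens, Tmap, if_pos hU, hsqrt]
  have h1 : (a + b + (a - b)) / 2 = a := by ring
  have h2 : (a + b - (a - b)) / 2 = b := by ring
  rw [h1, h2, abs_of_neg (by linarith), neg_sub]
  rw [← ENNReal.ofReal_mul (by linarith)]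
  have hcalc : (2 * a - 2 * b) * ((a - b)⁻¹ * f a * f b) = 2 * (f a * f b) := by
    field_simp
  rw [hcalc, ENNReal.ofReal_mul (by norm_num)]
  norm_num

theorem Fdens_measurable (f : ℝ → ℝ) (hfmeas : Measurable f) : Measurable (Fdens f) := by
  apply ENNReal.measurable_ofReal.comp
  apply Measurable.ite
  · exact measurableSet_lt (by fun_prop) (by fun_prop)
  · have hsqrtm : Measurable fun q : ℝ × ℝ => Real.sqrt (2 * q.2 - q.1 ^ 2) := by fun_prop
    exact ((hsqrtm.inv).mul (hfmeas.comp (by fun_prop))).mul (hfmeas.comp (by fun_prop))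
  · exact measurable_const

theorem prod_withDensity_eq (f : ℝ → ℝ) (hfmeas : Measurable f) :
    ((volume : Measure ℝ).withDensity (fun x => ENNReal.ofReal (f x))).prod
      ((volume : Measure ℝ).withDensity (fun x => ENNReal.ofReal (f x)))
    = (volume : Measure (ℝ × ℝ)).withDensity
        (fun p => ENNReal.ofReal (f p.1) * ENNReal.ofReal (f p.2)) := by
  have hm : Measurable fun x => ENNReal.ofReal (f x) := ENNReal.measurable_ofReal.comp hfmeas
  refine Measure.prod_eq fun s t hs ht => ?_
  rw [withDensity_apply _ (hs.prod ht), Measure.volume_eq_prod, ← Measure.prod_restrict,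
    lintegral_prod_mul (f := fun x => ENNReal.ofReal (f x)) (g := fun x => ENNReal.ofReal (f x))
      hm.aemeasurable hm.aemeasurable,
    withDensity_apply _ hs, withDensity_apply _ ht]

theorem map_Tmap_eq (f : ℝ → ℝ) (hf0 : ∀ x, 0 ≤ f x) (hfmeas : Measurable f) :
    ((volume : Measure (ℝ × ℝ)).withDensity
        (fun p => ENNReal.ofReal (f p.1) * ENNReal.ofReal (f p.2))).map Tmap
      = (volume : Measure (ℝ × ℝ)).withDensity (Fdens f) := by
  have hg2 : Measurable fun p : ℝ × ℝ => ENNReal.ofReal (f p.1) * ENNReal.ofReal (f p.2) := by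
    exact ((ENNReal.measurable_ofReal.comp hfmeas).comp measurable_fst).mul
      ((ENNReal.measurable_ofReal.comp hfmeas).comp measurable_snd)
  have hA : MeasurableSet {p : ℝ × ℝ | p.1 < p.2} := measurableSet_lt measurable_fst measurable_snd
  have hA' : MeasurableSet {p : ℝ × ℝ | p.2 < p.1} := measurableSet_lt measurable_snd measurable_fst
  have hU : MeasurableSet {q : ℝ × ℝ | q.1 ^ 2 < 2 * q.2} :=
    measurableSet_lt (by fun_prop) (by fun_prop)
  ext s hs
  rw [Measure.map_apply Tmap_measurable hs, withDensity_apply _ (Tmap_measurable hs),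
    withDensity_apply _ hs]
  set E : Set (ℝ × ℝ) := Tmap ⁻¹' s with hE
  set g2 : ℝ × ℝ → ENNReal := fun p => ENNReal.ofReal (f p.1) * ENNReal.ofReal (f p.2) with hg2def
  -- change of variables on each half
  have cov_lt : ∫⁻ q in s ∩ {q : ℝ × ℝ | q.1 ^ 2 < 2 * q.2}, Fdens f q
      = 2 * ∫⁻ p in E ∩ {p : ℝ × ℝ | p.1 < p.2}, g2 p := by
    rw [← image_lt s]
    rw [lintegral_image_eq_lintegral_abs_det_fderiv_mul volume
      ((Tmap_measurable hs).inter hA)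
      (fun x _ => (hasFDeriv_T x).hasFDerivWithinAt)
      (inj_lt.mono inter_subset_right) (Fdens f)]
    rw [← lintegral_const_mul 2 hg2]
    apply setLIntegral_congr_fun (((Tmap_measurable hs).inter hA))
    intro p hp
    dsimp only
    rw [det_Tder, dens_comp_lt f hp.2, hg2def]
    rw [ENNReal.ofReal_mul (hf0 p.1)]
  have cov_gt : ∫⁻ q in s ∩ {q : ℝ × ℝ | q.1 ^ 2 < 2 * q.2}, Fdens f q
      = 2 * ∫⁻ p in E ∩ {p : ℝ × ℝ | p.2 < p.1}, g2 p := by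
    rw [← image_gt s]
    rw [lintegral_image_eq_lintegral_abs_det_fderiv_mul volume
      ((Tmap_measurable hs).inter hA')
      (fun x _ => (hasFDeriv_T x).hasFDerivWithinAt)
      (inj_gt.mono inter_subset_right) (Fdens f)]
    rw [← lintegral_const_mul 2 hg2]
    apply setLIntegral_congr_fun (((Tmap_measurable hs).inter hA'))
    intro p hp
    dsimp only
    rw [det_Tder, dens_comp_gt f hp.2, hg2def]
    rw [ENNReal.ofReal_mul (hf0 p.1)]
  -- RHS reduces to s ∩ U
  have hFoff : ∫⁻ q in s, Fdens f q
      = ∫⁻ q in s ∩ {q : ℝ × ℝ | q.1 ^ 2 < 2 * q.2}, Fdens f q := by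
    have hsplit : s = (s ∩ {q : ℝ × ℝ | q.1 ^ 2 < 2 * q.2})
        ∪ (s \ {q : ℝ × ℝ | q.1 ^ 2 < 2 * q.2}) := (inter_union_diff s _).symm
    have hzero : ∫⁻ q in s \ {q : ℝ × ℝ | q.1 ^ 2 < 2 * q.2}, Fdens f q = 0 := by
      have := setLIntegral_congr_fun (μ := volume) (f := Fdens f) (g := fun _ => 0) (hs.diff hU)
        (by intro q hq
            simp only [Fdens]
            rw [if_neg (by simpa using hq.2)]
            simp)
      rw [this, lintegral_zero]
    conv_lhs => rw [hsplit]
    rw [lintegral_union (hs.diff hU)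
      (disjoint_sdiff_self_right.mono_left inter_subset_right), hzero, add_zero]
  -- LHS splits over the two halves plus a null diagonal
  have hEsplit : ∫⁻ p in E, g2 p = (∫⁻ p in E ∩ {p : ℝ × ℝ | p.1 < p.2}, g2 p)
      + ∫⁻ p in E ∩ {p : ℝ × ℝ | p.2 < p.1}, g2 p := by
    have hdecomp : E = (E ∩ {p : ℝ × ℝ | p.1 < p.2}) ∪ (E ∩ {p : ℝ × ℝ | p.2 < p.1})
        ∪ (E ∩ {p : ℝ × ℝ | p.1 = p.2}) := by
      ext p
      rcases lt_trichotomy p.1 p.2 with h | h | h <;>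
        simp [h, ne_of_lt, ne_of_gt, lt_irrefl, not_lt_of_gt]
    have hnull : ∫⁻ p in E ∩ {p : ℝ × ℝ | p.1 = p.2}, g2 p = 0 :=
      setLIntegral_measure_zero _ _ (measure_mono_null inter_subset_right diag_null)
    have hD : MeasurableSet {p : ℝ × ℝ | p.1 = p.2} :=
      measurableSet_eq_fun measurable_fst measurable_snd
    have d1 : Disjoint (E ∩ {p : ℝ × ℝ | p.1 < p.2}) (E ∩ {p : ℝ × ℝ | p.2 < p.1}) := by
      rw [disjoint_left]
      rintro p ⟨_, h1⟩ ⟨_, h2⟩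
      simp only [mem_setOf_eq] at h1 h2
      exact lt_asymm h1 h2
    have d2 : Disjoint ((E ∩ {p : ℝ × ℝ | p.1 < p.2}) ∪ (E ∩ {p : ℝ × ℝ | p.2 < p.1}))
        (E ∩ {p : ℝ × ℝ | p.1 = p.2}) := by
      rw [disjoint_left]
      rintro p (⟨_, h⟩ | ⟨_, h⟩) ⟨_, hd⟩ <;> simp only [mem_setOf_eq] at h hd <;> linarith
    conv_lhs => rw [hdecomp]
    rw [lintegral_union ((Tmap_measurable hs).inter hD) d2, hnull, add_zero,
      lintegral_union ((Tmap_measurable hs).inter hA') d1]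
  rw [hEsplit, hFoff]
  -- conclude by cancellation of the factor 2
  have h2 : (2 : ENNReal) * ((∫⁻ p in E ∩ {p : ℝ × ℝ | p.1 < p.2}, g2 p)
      + ∫⁻ p in E ∩ {p : ℝ × ℝ | p.2 < p.1}, g2 p)
      = 2 * ∫⁻ q in s ∩ {q : ℝ × ℝ | q.1 ^ 2 < 2 * q.2}, Fdens f q := by
    rw [mul_add, ← cov_lt, ← cov_gt, two_mul]
  exact (ENNReal.mul_right_inj (by norm_num) (by norm_num)).1 h2

theorem conv_sq_density
    (f : ℝ → ℝ) (hf0 : ∀ x, 0 ≤ f x) (hfmeas : Measurable f)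
    (hf1 : ∫ x, f x = 1)
    (ρac : Measure ℝ) (hρ : ρac = volume.withDensity (fun x => ENNReal.ofReal (f x)))
    (ν : Measure (ℝ × ℝ)) (hν : ν = ρac.map (fun z => (z, z ^ 2))) :
    (ν.prod ν).map (fun p => p.1 + p.2)
      = volume.withDensity (fun q : ℝ × ℝ =>
          ENNReal.ofReal
            (if q.1 ^ 2 < 2 * q.2 then
              (Real.sqrt (2 * q.2 - q.1 ^ 2))⁻¹
                * f ((q.1 + Real.sqrt (2 * q.2 - q.1 ^ 2)) / 2)
                * f ((q.1 - Real.sqrt (2 * q.2 - q.1 ^ 2)) / 2)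
            else 0)) := by
  subst hρ hν
  have hsm : Measurable fun z : ℝ => (z, z ^ 2) := by fun_prop
  have haddm : Measurable fun p : (ℝ × ℝ) × (ℝ × ℝ) => p.1 + p.2 := by fun_prop
  rw [Measure.map_prod_map _ _ hsm hsm, Measure.map_map haddm (hsm.prodMap hsm)]
  have hcomp : (fun p : (ℝ × ℝ) × (ℝ × ℝ) => p.1 + p.2)
      ∘ (Prod.map (fun z : ℝ => (z, z ^ 2)) (fun z : ℝ => (z, z ^ 2))) = Tmap := by
    funext p
    simp [Tmap, Prod.map, Prod.ext_iff]
  rw [hcomp, prod_withDensity_eq f hfmeas, map_Tmap_eq f hf0 hfmeas]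
  rfl
end

section
/- If ν₂ is a probability measure on ℝ^d satisfying the Cramér condition and ν₂ is absolutely continuous with respect to a probability measure ν₁ on ℝ^d, then ν₁ also satisfies the Cramér condition. -/
open MeasureTheory Complex Filter

section Aux

variable {d : ℕ}

local notation "E" => EuclideanSpace ℝ (Fin d)

lemma charKernel_continuous (s : E) :
    Continuous fun x : E => Complex.exp (Complex.I * ((inner ℝ s x : ℝ) : ℂ)) := by
  apply Complex.continuous_exp.comp
  exact continuous_const.mul (Complex.continuous_ofReal.comp (continuous_const.inner continuous_id))

lemma charKernel_norm (r : ℝ) : ‖Complex.exp (Complex.I * (r : ℂ))‖ = 1 := by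
  rw [Complex.norm_exp]
  simp

lemma charKernel_integrable (ν : Measure (EuclideanSpace ℝ (Fin d))) [IsProbabilityMeasure ν] (s : E) :
    Integrable (fun x : E => Complex.exp (Complex.I * ((inner ℝ s x : ℝ) : ℂ))) ν := by
  refine Integrable.mono' (integrable_const 1) (charKernel_continuous s).aestronglyMeasurable ?_
  filter_upwards with x
  rw [charKernel_norm]


lemma conj_unit_mul_self (w : ℂ) (hw : w ≠ 0) :
    starRingEnd ℂ ((‖w‖ : ℂ)⁻¹ * w) * w = (‖w‖ : ℂ) := by
  rw [map_mul, map_inv₀, Complex.conj_ofReal, mul_assoc, mul_comm (starRingEnd ℂ w),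
    Complex.mul_conj, Complex.normSq_eq_norm_sq]
  have hn : ((‖w‖ : ℝ) : ℂ) ≠ 0 := Complex.ofReal_ne_zero.mpr (norm_ne_zero_iff.mpr hw)
  push_cast
  field_simp

end Aux

theorem cramer_condition_of_absolutelyContinuous_measure
    (d : ℕ) (ν₁ ν₂ : Measure (EuclideanSpace ℝ (Fin d)))
    [IsProbabilityMeasure ν₁] [IsProbabilityMeasure ν₂]
    (hac : ν₂ ≪ ν₁)
    (hC : ∀ α : ℝ, 0 < α →
      (⨆ s : {s : EuclideanSpace ℝ (Fin d) // α ≤ ‖s‖},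
        ‖∫ x, Complex.exp (Complex.I * (inner ℝ s.1 x : ℝ)) ∂ν₂‖) < 1) :
    ∀ α : ℝ, 0 < α →
      (⨆ s : {s : EuclideanSpace ℝ (Fin d) // α ≤ ‖s‖},
        ‖∫ x, Complex.exp (Complex.I * (inner ℝ s.1 x : ℝ)) ∂ν₁‖) < 1 := by
  intro α hα
  by_contra hcon
  push_neg at hcon
  -- the index type is nonempty (otherwise the sup is 0 < 1)
  haveI hne : Nonempty {s : EuclideanSpace ℝ (Fin d) // α ≤ ‖s‖} := by
    by_contra h
    rw [not_nonempty_iff] at h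
    rw [Real.iSup_of_isEmpty] at hcon
    linarith
  have hS₂ := hC α hα
  set S₂ := ⨆ s : {s : EuclideanSpace ℝ (Fin d) // α ≤ ‖s‖},
      ‖∫ x, Complex.exp (Complex.I * (inner ℝ s.1 x : ℝ)) ∂ν₂‖ with hS₂def
  -- choose a sequence of frequencies whose ν₁-characteristic values tend to 1 in norm
  have hex : ∀ n : ℕ, ∃ s : {s : EuclideanSpace ℝ (Fin d) // α ≤ ‖s‖},
      1 - 1/(n+1 : ℝ) < ‖∫ x, Complex.exp (Complex.I * (inner ℝ s.1 x : ℝ)) ∂ν₁‖ := by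
    intro n
    apply exists_lt_of_lt_ciSup
    have h1 : 1 - 1/(n+1 : ℝ) < 1 := by
      have : 0 < 1/(n+1 : ℝ) := by positivity
      linarith
    exact lt_of_lt_of_le h1 hcon
  choose s hs using hex
  set z : ℕ → ℂ := fun n => ∫ x, Complex.exp (Complex.I * (inner ℝ (s n).1 x : ℝ)) ∂ν₁ with hz
  have hzpos : ∀ n, 0 < ‖z n‖ := by
    intro n
    have h0 : (0:ℝ) ≤ 1 - 1/(n+1 : ℝ) := by
      have : 1/(n+1 : ℝ) ≤ 1 := by
        rw [div_le_one (by positivity)]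
        simp
      linarith
    exact lt_of_le_of_lt h0 (hs n)
  set u : ℕ → ℂ := fun n => (‖z n‖ : ℂ)⁻¹ * z n with hu
  set c : ℕ → ℂ := fun n => starRingEnd ℂ (u n) with hc
  have hcnorm : ∀ n, ‖c n‖ = 1 := by
    intro n
    rw [hc]
    rw [RCLike.norm_conj]
    rw [hu, norm_mul, norm_inv, Complex.norm_real, Real.norm_of_nonneg (norm_nonneg _)]
    rw [inv_mul_cancel₀ (hzpos n).ne']
  have hcz : ∀ n, c n * z n = (‖z n‖ : ℂ) := fun n =>
    conj_unit_mul_self (z n) (norm_pos_iff.mp (hzpos n))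
  set g : ℕ → EuclideanSpace ℝ (Fin d) → ℝ := fun n x =>
    1 - (c n * Complex.exp (Complex.I * (inner ℝ (s n).1 x : ℝ))).re with hg
  have hgcont : ∀ n, Continuous (g n) :=
    fun n => continuous_const.sub (Complex.continuous_re.comp
      (continuous_const.mul (charKernel_continuous (s n).1)))
  have hg0 : ∀ n x, 0 ≤ g n x := by
    intro n x
    have h1 : (c n * Complex.exp (Complex.I * (inner ℝ (s n).1 x : ℝ))).re ≤ 1 := by
      calc (c n * Complex.exp (Complex.I * (inner ℝ (s n).1 x : ℝ))).re
          ≤ ‖c n * Complex.exp (Complex.I * (inner ℝ (s n).1 x : ℝ))‖ :=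
            Complex.re_le_norm _
        _ = 1 := by rw [norm_mul, hcnorm, charKernel_norm, one_mul]
    simp only [hg]
    linarith
  have hg2 : ∀ n x, g n x ≤ 2 := by
    intro n x
    have h1 : -1 ≤ (c n * Complex.exp (Complex.I * (inner ℝ (s n).1 x : ℝ))).re := by
      have := Complex.abs_re_le_norm (c n * Complex.exp (Complex.I * (inner ℝ (s n).1 x : ℝ)))
      rw [norm_mul, hcnorm, charKernel_norm, one_mul] at this
      have := abs_le.mp this
      linarith [this.1]
    simp only [hg]
    linarith
  have hgint : ∀ n (ν : Measure (EuclideanSpace ℝ (Fin d))) [IsProbabilityMeasure ν], Integrable (g n) ν := by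
    intro n ν _
    refine Integrable.mono' (integrable_const 2) (hgcont n).aestronglyMeasurable ?_
    filter_upwards with x
    rw [Real.norm_of_nonneg (hg0 n x)]
    exact hg2 n x
  -- the integral of g n with respect to any probability measure
  have hgval : ∀ n (ν : Measure (EuclideanSpace ℝ (Fin d))) [IsProbabilityMeasure ν],
      ∫ x, g n x ∂ν = 1 - (c n * ∫ x, Complex.exp (Complex.I * (inner ℝ (s n).1 x : ℝ)) ∂ν).re := by
    intro n ν _
    have hint : Integrable
        (fun x => (c n * Complex.exp (Complex.I * ((inner ℝ (s n).1 x : ℝ) : ℂ))).re) ν :=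
      (((charKernel_integrable ν (s n).1).const_mul (c n)).re)
    rw [hg]
    rw [integral_sub (integrable_const 1) hint, integral_const, probReal_univ,
      one_smul]
    congr 1
    rw [← RCLike.re_eq_complex_re, integral_re (((charKernel_integrable ν (s n).1).const_mul (c n))),
      integral_const_mul, RCLike.re_eq_complex_re]
  have hgν₁ : ∀ n, ∫ x, g n x ∂ν₁ = 1 - ‖z n‖ := by
    intro n
    have hfold : (∫ x, Complex.exp (Complex.I * (inner ℝ (s n).1 x : ℝ)) ∂ν₁) = z n := rfl
    rw [hgval n ν₁, hfold, hcz n, Complex.ofReal_re]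
  -- ∫ g n dν₁ → 0
  have htend1 : Tendsto (fun n => ∫ x, g n x ∂ν₁) atTop (nhds 0) := by
    apply squeeze_zero (fun n => integral_nonneg (hg0 n)) (fun n => ?_)
      tendsto_one_div_add_atTop_nhds_zero_nat
    rw [hgν₁ n]
    linarith [hs n]
  -- convergence in L¹ hence in measure; extract an a.e. convergent subsequence
  have heLp : ∀ n, eLpNorm (g n) 1 ν₁ = ENNReal.ofReal (∫ x, g n x ∂ν₁) := by
    intro n
    rw [eLpNorm_one_eq_lintegral_enorm,
      ofReal_integral_eq_lintegral_ofReal (hgint n ν₁) (Eventually.of_forall (hg0 n))]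
    apply lintegral_congr
    intro x
    rw [← ofReal_norm_eq_enorm, Real.norm_of_nonneg (hg0 n x)]
  have htendLp : Tendsto (fun n => eLpNorm (g n - (fun _ => 0)) 1 ν₁) atTop (nhds 0) := by
    have : (fun n => eLpNorm (g n - (fun _ => 0)) 1 ν₁)
        = fun n => ENNReal.ofReal (∫ x, g n x ∂ν₁) := by
      funext n
      have hfun : (g n - fun _ => (0:ℝ)) = g n := by funext x; simp
      rw [hfun, heLp n]
    rw [this, ← ENNReal.ofReal_zero]
    exact ENNReal.tendsto_ofReal htend1
  have htendM : TendstoInMeasure ν₁ g atTop (fun _ => 0) :=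
    tendstoInMeasure_of_tendsto_eLpNorm one_ne_zero
      (fun n => (hgcont n).aestronglyMeasurable) aestronglyMeasurable_const htendLp
  obtain ⟨ns, hns_mono, hae⟩ := htendM.exists_seq_tendsto_ae
  -- transfer a.e. convergence to ν₂ and apply dominated convergence
  have hae₂ : ∀ᵐ x ∂ν₂, Tendsto (fun i => g (ns i) x) atTop (nhds 0) := by
    have := hae.filter_mono hac.ae_le
    filter_upwards [this] with x hx using hx
  have hdom : Tendsto (fun i => ∫ x, g (ns i) x ∂ν₂) atTop (nhds (∫ _x, (0:ℝ) ∂ν₂)) := by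
    apply tendsto_integral_of_dominated_convergence (fun _ => (2:ℝ))
      (fun i => (hgcont (ns i)).aestronglyMeasurable) (integrable_const 2)
      (fun i => Eventually.of_forall fun x => ?_) hae₂
    rw [Real.norm_of_nonneg (hg0 (ns i) x)]
    exact hg2 (ns i) x
  rw [integral_zero] at hdom
  -- but each such integral is at least 1 - S₂ > 0, contradiction
  have hbdd : BddAbove (Set.range fun s : {s : EuclideanSpace ℝ (Fin d) // α ≤ ‖s‖} =>
      ‖∫ x, Complex.exp (Complex.I * (inner ℝ s.1 x : ℝ)) ∂ν₂‖) := by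
    refine ⟨1, ?_⟩
    rintro r ⟨t, rfl⟩
    calc ‖∫ x, Complex.exp (Complex.I * (inner ℝ t.1 x : ℝ)) ∂ν₂‖
        ≤ ∫ x, ‖Complex.exp (Complex.I * ((inner ℝ t.1 x : ℝ) : ℂ))‖ ∂ν₂ :=
          norm_integral_le_integral_norm _
      _ = 1 := by simp only [charKernel_norm]; simp
  have hlow : ∀ i, 1 - S₂ ≤ ∫ x, g (ns i) x ∂ν₂ := by
    intro i
    rw [hgval (ns i) ν₂]
    have h1 : (c (ns i) * ∫ x, Complex.exp (Complex.I * (inner ℝ (s (ns i)).1 x : ℝ)) ∂ν₂).re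
        ≤ S₂ := by
      calc (c (ns i) * ∫ x, Complex.exp (Complex.I * (inner ℝ (s (ns i)).1 x : ℝ)) ∂ν₂).re
          ≤ ‖c (ns i) * ∫ x, Complex.exp (Complex.I * (inner ℝ (s (ns i)).1 x : ℝ)) ∂ν₂‖ :=
            Complex.re_le_norm _
        _ = ‖∫ x, Complex.exp (Complex.I * (inner ℝ (s (ns i)).1 x : ℝ)) ∂ν₂‖ := by
            rw [norm_mul, hcnorm, one_mul]
        _ ≤ S₂ := le_ciSup hbdd (s (ns i))
    linarith
  have : 1 - S₂ ≤ 0 := ge_of_tendsto' hdom hlow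
  linarith
end

section
/- For every compact set K ⊂ ℝ there exists M > 0 such that for all s ∈ ℝ and u ∈ K, |2(cosh(u + is) − 1)/(u + is)²| ≤ M/(1 + s²), where the function is extended by continuity (value 1) at u + is = 0. -/
open Complex

lemma cosh_sub_one_abs_le_sq {z : ℂ} (hz : ‖z‖ ≤ 1) :
    ‖Complex.cosh z - 1‖ ≤ ‖z‖ ^ 2 := by
  have h1 : ‖Complex.exp z - 1 - z‖ ≤ ‖z‖ ^ 2 :=
    Complex.norm_exp_sub_one_sub_id_le hz
  have h2 : ‖Complex.exp (-z) - 1 - (-z)‖ ≤ ‖z‖ ^ 2 := by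
    have := Complex.norm_exp_sub_one_sub_id_le (x := -z) (by simpa using hz)
    simpa using this
  have key : Complex.cosh z - 1 =
      ((Complex.exp z - 1 - z) + (Complex.exp (-z) - 1 - (-z))) / 2 := by
    rw [Complex.cosh]; ring
  rw [key]
  calc ‖((Complex.exp z - 1 - z) + (Complex.exp (-z) - 1 - (-z))) / 2‖
      ≤ (‖Complex.exp z - 1 - z‖
          + ‖Complex.exp (-z) - 1 - (-z)‖) / 2 := by
        rw [norm_div]
        simp only [Complex.norm_two]
        gcongr
        exact norm_add_le _ _
    _ ≤ (‖z‖ ^ 2 + ‖z‖ ^ 2) / 2 := by gcongr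
    _ = ‖z‖ ^ 2 := by ring

lemma abs_cosh_le (z : ℂ) : ‖Complex.cosh z‖ ≤ Real.cosh z.re := by
  rw [Complex.cosh, Real.cosh_eq]
  calc ‖(Complex.exp z + Complex.exp (-z)) / 2‖
      ≤ (‖Complex.exp z‖ + ‖Complex.exp (-z)‖) / 2 := by
        rw [norm_div]
        simp only [Complex.norm_two]
        gcongr
        exact norm_add_le _ _
    _ = (Real.exp z.re + Real.exp (-z.re)) / 2 := by
        rw [Complex.norm_exp, Complex.norm_exp, Complex.neg_re]

theorem cosh_kernel_decay_bound
    (K : Set ℝ) (hK : IsCompact K) :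
    ∃ M : ℝ, 0 < M ∧ ∀ (s : ℝ), ∀ u ∈ K,
      ‖(if (u + s * Complex.I : ℂ) = 0 then 1
          else 2 * (Complex.cosh (u + s * Complex.I) - 1) / (u + s * Complex.I) ^ 2)‖
        ≤ M / (1 + s ^ 2) := by
  obtain ⟨R, hR⟩ := hK.isBounded.subset_closedBall 0
  set R' : ℝ := max R 0 with hR'def
  have hcosh1 : (1 : ℝ) ≤ Real.cosh R' := Real.one_le_cosh R'
  refine ⟨4 * (Real.cosh R' + 1), by positivity, ?_⟩
  intro s u hu
  set z : ℂ := (u : ℂ) + s * Complex.I with hzdef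
  have hre : z.re = u := by simp [hzdef]
  have him : z.im = s := by simp [hzdef]
  have habsz : ‖z‖ ^ 2 = u ^ 2 + s ^ 2 := by
    rw [Complex.sq_norm, Complex.normSq_apply, hre, him]; ring
  have huR : |u| ≤ R' := by
    have := hR hu
    simp only [Metric.mem_closedBall, Real.dist_eq, sub_zero] at this
    exact this.trans (le_max_left _ _)
  have hs2 : (0:ℝ) < 1 + s ^ 2 := by positivity
  -- global bound on |cosh z - 1|
  have hglob : ‖Complex.cosh z - 1‖ ≤ Real.cosh R' + 1 := by
    calc ‖Complex.cosh z - 1‖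
        ≤ ‖Complex.cosh z‖ + 1 := by
          simpa using norm_sub_le (Complex.cosh z) 1
      _ ≤ Real.cosh R' + 1 := by
          have h1 := abs_cosh_le z
          have h2 : Real.cosh z.re ≤ Real.cosh R' := by
            rw [← Real.cosh_abs, hre]
            exact Real.cosh_le_cosh.mpr (by simpa using huR.trans (le_abs_self R'))
          linarith
  by_cases hz : z = 0
  · rw [hzdef] at hz
    rw [if_pos hz]
    have hs0 : s = 0 := by
      have := congrArg Complex.im hz
      simpa using this
    rw [hs0]
    norm_num
    nlinarith
  · rw [hzdef] at hz
    rw [if_neg hz]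
    have hzpos : 0 < ‖z‖ := by
      rw [hzdef]; exact norm_pos_iff.mpr hz
    have hnorm : ‖2 * (Complex.cosh z - 1) / z ^ 2‖
        = 2 * ‖Complex.cosh z - 1‖ / ‖z‖ ^ 2 := by
      rw [norm_div, norm_mul, norm_pow]
      norm_num
    rw [hnorm]
    rcases le_or_gt (‖z‖) 1 with h1 | h1
    · -- small z : |cosh z - 1| ≤ |z|^2, and 1 + s^2 ≤ 2
      have hb := cosh_sub_one_abs_le_sq h1
      have hval : 2 * ‖Complex.cosh z - 1‖ / ‖z‖ ^ 2 ≤ 2 := by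
        rw [div_le_iff₀ (by positivity)]
        nlinarith
      have hs1 : s ^ 2 ≤ 1 := by nlinarith [sq_nonneg u, sq_nonneg (‖z‖)]
      have : (2:ℝ) ≤ 4 * (Real.cosh R' + 1) / (1 + s ^ 2) := by
        rw [le_div_iff₀ hs2]
        nlinarith
      linarith [hval]
    · -- large z : |z|^2 ≥ max(1, s^2) ≥ (1+s^2)/2
      have hzsq : (1 + s ^ 2) / 2 ≤ ‖z‖ ^ 2 := by
        nlinarith [sq_nonneg u, sq_nonneg s]
      rw [div_le_div_iff₀ (by positivity) hs2]
      have habsnn : 0 ≤ ‖Complex.cosh z - 1‖ := norm_nonneg _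
      nlinarith [mul_le_mul hglob hzsq (by positivity) (by linarith)]
end

section
/- Let ρ be a symmetric probability measure on ℝ with positive variance σ² and such that (0,0) lies in the interior of the domain of the log-Laplace transform L(u,v) = ln ∫ e^{uz+vz²} dρ(z). Then there exists γ > 0 such that, for all δ ∈ (0, σ²) small enough and all n large enough, E(e^{S_n²/(2T_n)} 1_{0 < T_n ≤ nδ}) ≤ e^{−nγ}, where S_n = X₁+…+X_n and T_n = X₁²+…+X_n² for X₁,…,X_n i.i.d. with law ρ. -/
open MeasureTheory Filter Finset Topology

lemma pi_integral_pow {ρ : Measure ℝ} [IsProbabilityMeasure ρ] (f : ℝ → ℝ) (n : ℕ) :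
    ∫ x : Fin n → ℝ, ∏ i, f (x i) ∂(Measure.pi fun _ : Fin n => ρ)
      = (∫ z, f z ∂ρ) ^ n := by
  letI : MeasureSpace ℝ := ⟨ρ⟩
  have h := MeasureTheory.integral_fintype_prod_eq_pow (𝕜 := ℝ) (ι := Fin n) f (μ := ρ)
  simpa using h

lemma pi_integrable_prod {ρ : Measure ℝ} [IsProbabilityMeasure ρ] {f : ℝ → ℝ}
    (hf : Integrable f ρ) (n : ℕ) :
    Integrable (fun x : Fin n → ℝ => ∏ i, f (x i)) (Measure.pi fun _ : Fin n => ρ) := by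
  letI : MeasureSpace ℝ := ⟨ρ⟩
  exact Integrable.fintype_prod (f := fun _ : Fin n => f) (fun _ => hf)

theorem exponential_bound_near_origin
    (ρ : Measure ℝ) [IsProbabilityMeasure ρ]
    (hsymm : ρ.map (fun z => -z) = ρ)
    (σ2 : ℝ) (hσ2 : 0 < σ2) (hvar : ∫ z, z ^ 2 ∂ρ = σ2)
    (hL : ∃ ε > 0, ∀ u v : ℝ, ‖(u, v)‖ < ε →
      Integrable (fun z => Real.exp (u * z + v * z ^ 2)) ρ) :
    ∃ γ > 0, ∃ δ0 > 0, ∀ δ : ℝ, 0 < δ → δ < δ0 → δ < σ2 →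
      ∃ N : ℕ, ∀ n ≥ N,
        (∫ x : Fin n → ℝ,
            (if 0 < ∑ i, (x i) ^ 2 ∧ ∑ i, (x i) ^ 2 ≤ n * δ then
              Real.exp ((∑ i, x i) ^ 2 / (2 * ∑ i, (x i) ^ 2)) else 0)
          ∂(Measure.pi fun _ : Fin n => ρ))
        ≤ Real.exp (-(n * γ)) := by
  -- the atom at 0 has mass < 1
  set p0 : ℝ := (ρ {0}).toReal with hp0def
  have hρ0ne : ρ {0} ≠ 1 := by
    intro h
    have hc : ρ ({0}ᶜ) = 0 := by
      have h2 := measure_compl (μ := ρ) (measurableSet_singleton 0) (measure_ne_top ρ _)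
      rw [measure_univ, h] at h2
      simpa using h2
    have hae : ∀ᵐ z ∂ρ, z ∈ ({0} : Set ℝ) := by
      rw [ae_iff]
      exact hc
    have : ∫ z, z ^ 2 ∂ρ = ∫ _z, (0 : ℝ) ∂ρ := by
      refine integral_congr_ae ?_
      filter_upwards [hae] with z hz
      simp only [Set.mem_singleton_iff] at hz
      simp [hz]
    rw [hvar] at this
    simp at this
    exact absurd this (ne_of_gt hσ2)
  have hp0lt : p0 < 1 := by
    have h1 : ρ {0} < 1 := lt_of_le_of_ne prob_le_one hρ0ne
    have h2 := (ENNReal.toReal_lt_toReal (a := ρ {0}) (b := 1)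
      (measure_ne_top ρ _) ENNReal.one_ne_top).mpr h1
    simpa [hp0def] using h2
  have hp0nonneg : 0 ≤ p0 := ENNReal.toReal_nonneg
  set r : ℝ := (1 + p0) / 2 with hrdef
  have hr0 : 0 < r := by positivity
  have hr1 : r < 1 := by rw [hrdef]; linarith
  -- the family of dominating single-variable functions
  set F : ℕ → ℝ → ℝ :=
    fun m z => Real.exp ((if z = 0 then 0 else 1/2) - m * z ^ 2) with hFdef
  have hFmeas : ∀ m, Measurable (F m) := by
    intro m
    apply Real.measurable_exp.comp
    apply Measurable.sub
    · exact Measurable.ite (measurableSet_eq) measurable_const measurable_const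
    · exact (measurable_const.mul ((measurable_id.pow_const 2)))
  have hFpos : ∀ m z, 0 < F m z := fun m z => Real.exp_pos _
  have hFle : ∀ m z, F m z ≤ Real.exp (1/2) := by
    intro m z
    apply Real.exp_le_exp.mpr
    have h1 : (if z = 0 then (0:ℝ) else 1/2) ≤ 1/2 := by split <;> norm_num
    nlinarith [sq_nonneg z, Nat.cast_nonneg (α := ℝ) m, mul_nonneg (Nat.cast_nonneg (α := ℝ) m) (sq_nonneg z)]
  have hFint : ∀ m, Integrable (F m) ρ := by
    intro m
    refine Integrable.mono' (integrable_const (Real.exp (1/2))) (hFmeas m).aestronglyMeasurable ?_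
    filter_upwards with z
    rw [Real.norm_eq_abs, abs_of_pos (hFpos m z)]
    exact hFle m z
  -- dominated convergence: ∫ F m → p0
  have hlim : Tendsto (fun m => ∫ z, F m z ∂ρ) atTop
      (𝓝 (∫ z, (if z = 0 then (1:ℝ) else 0) ∂ρ)) := by
    refine tendsto_integral_of_dominated_convergence (fun _ => Real.exp (1/2))
      (fun m => (hFmeas m).aestronglyMeasurable) (integrable_const _) ?_ ?_
    · intro m
      filter_upwards with z
      rw [Real.norm_eq_abs, abs_of_pos (hFpos m z)]
      exact hFle m z
    · filter_upwards with z
      by_cases hz : z = 0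
      · simp only [hFdef, hz, if_pos rfl]
        simpa using tendsto_const_nhds (x := Real.exp 0) (f := (atTop : Filter ℕ))
      · simp only [hFdef, if_neg hz]
        have h1 : Tendsto (fun m : ℕ => (1:ℝ)/2 - m * z ^ 2) atTop atBot := by
          apply tendsto_atBot_add_const_left
          rw [tendsto_neg_atBot_iff]
          exact Tendsto.atTop_mul_const (by positivity : 0 < z ^ 2)
            tendsto_natCast_atTop_atTop
        exact Real.tendsto_exp_atBot.comp h1
  have hglim : (∫ z, (if z = 0 then (1:ℝ) else 0) ∂ρ) = p0 := by
    have : (fun z : ℝ => if z = 0 then (1:ℝ) else 0)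
        = Set.indicator ({0} : Set ℝ) (fun _ => (1:ℝ)) := by
      funext z; simp [Set.indicator_apply]
    rw [this]
    rw [integral_indicator_const (1:ℝ) (measurableSet_singleton 0)]
    simp [hp0def, measureReal_def]
  rw [hglim] at hlim
  -- choose m
  have hev : ∀ᶠ m in atTop, ∫ z, F m z ∂ρ < r := by
    apply hlim.eventually_lt_const
    rw [hrdef]; linarith
  obtain ⟨M, hM⟩ := eventually_atTop.mp hev
  set m : ℕ := M + 1 with hmdef
  have hm1 : 1 ≤ m := Nat.le_add_left 1 M
  have hmint : ∫ z, F m z ∂ρ < r := hM m (Nat.le_succ M)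
  have hmpos : (0:ℝ) < m := by exact_mod_cast Nat.lt_of_lt_of_le Nat.zero_lt_one hm1
  set c : ℝ := -Real.log r with hcdef
  have hc0 : 0 < c := by
    rw [hcdef]; simpa using Real.log_neg hr0 hr1
  refine ⟨c/2, by positivity, c/(2*m), by positivity, ?_⟩
  intro δ hδ0 hδδ0 _hδσ
  refine ⟨0, fun n _ => ?_⟩
  set T : (Fin n → ℝ) → ℝ := fun x => ∑ i, (x i) ^ 2 with hTdef
  set S : (Fin n → ℝ) → ℝ := fun x => ∑ i, x i with hSdef
  have hIF : 0 ≤ ∫ z, F m z ∂ρ := integral_nonneg (fun z => (hFpos m z).le)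
  -- pointwise bound
  have hpt : ∀ x : Fin n → ℝ,
      (if 0 < T x ∧ T x ≤ n * δ then Real.exp ((S x) ^ 2 / (2 * T x)) else 0)
        ≤ Real.exp ((m : ℝ) * (n * δ)) * ∏ i, F m (x i) := by
    intro x
    have hRHS : Real.exp ((m : ℝ) * (n * δ)) * ∏ i, F m (x i)
        = Real.exp ((m : ℝ) * (n * δ)
            + ∑ i, ((if x i = 0 then (0:ℝ) else 1/2) - m * (x i) ^ 2)) := by
      rw [Real.exp_add, Real.exp_sum]
    rw [hRHS]
    split
    · rename_i h
      obtain ⟨hT0, hTδ⟩ := h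
      apply Real.exp_le_exp.mpr
      set s : Finset (Fin n) := Finset.univ.filter (fun i => x i ≠ 0) with hsdef
      have hSeq : S x = ∑ i ∈ s, x i := by
        rw [hsdef]
        exact (Finset.sum_filter_of_ne (fun i _ h => h)).symm
      have hTeq : T x = ∑ i ∈ s, (x i) ^ 2 := by
        rw [hsdef]
        refine (Finset.sum_filter_of_ne (fun i _ h => ?_)).symm
        exact fun hx => h (by rw [hx]; ring)
      have hCS : (S x) ^ 2 ≤ (s.card : ℝ) * T x := by
        rw [hSeq, hTeq]
        exact_mod_cast sq_sum_le_card_mul_sum_sq (s := s) (f := x)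
      have hsum : ∑ i, (if x i = 0 then (0:ℝ) else 1/2) = (s.card : ℝ) * (1/2) := by
        have : ∑ i, (if x i = 0 then (0:ℝ) else 1/2)
            = ∑ i, (if x i ≠ 0 then (1:ℝ)/2 else 0) := by
          apply Finset.sum_congr rfl
          intro i _
          by_cases h : x i = 0 <;> simp [h]
        rw [this, ← Finset.sum_filter, ← hsdef, Finset.sum_const]
        simp [mul_comm]
    -- S²/(2T) ≤ card/2 and m*T ≤ m*n*δ
      have hdiv : (S x) ^ 2 / (2 * T x) ≤ (s.card : ℝ) * (1/2) := by
        rw [div_le_iff₀ (by linarith)]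
        calc (S x) ^ 2 ≤ (s.card : ℝ) * T x := hCS
          _ = (s.card : ℝ) * (1/2) * (2 * T x) := by ring
      have hmT : (m : ℝ) * T x ≤ (m : ℝ) * (n * δ) :=
        mul_le_mul_of_nonneg_left hTδ (le_of_lt hmpos)
      have hsplit : ∑ i, ((if x i = 0 then (0:ℝ) else 1/2) - m * (x i) ^ 2)
          = (∑ i, (if x i = 0 then (0:ℝ) else 1/2)) - m * T x := by
        rw [Finset.sum_sub_distrib, Finset.mul_sum]
      rw [hsplit, hsum]
      linarith
    · positivity
  -- integrate
  have hint : Integrable (fun x : Fin n → ℝ =>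
      Real.exp ((m : ℝ) * (n * δ)) * ∏ i, F m (x i)) (Measure.pi fun _ : Fin n => ρ) :=
    (pi_integrable_prod (hFint m) n).const_mul _
  have hmono : (∫ x : Fin n → ℝ,
      (if 0 < T x ∧ T x ≤ n * δ then Real.exp ((S x) ^ 2 / (2 * T x)) else 0)
        ∂(Measure.pi fun _ : Fin n => ρ))
      ≤ ∫ x : Fin n → ℝ, Real.exp ((m : ℝ) * (n * δ)) * ∏ i, F m (x i)
        ∂(Measure.pi fun _ : Fin n => ρ) := by
    refine integral_mono_of_nonneg ?_ hint ?_
    · filter_upwards with x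
      split
      · exact (Real.exp_pos _).le
      · exact le_refl 0
    · filter_upwards with x
      exact hpt x
  have hprod : ∫ x : Fin n → ℝ, Real.exp ((m : ℝ) * (n * δ)) * ∏ i, F m (x i)
        ∂(Measure.pi fun _ : Fin n => ρ)
      = Real.exp ((m : ℝ) * (n * δ)) * (∫ z, F m z ∂ρ) ^ n := by
    rw [integral_const_mul, pi_integral_pow]
  refine le_trans hmono ?_
  rw [hprod]
  have hpow : (∫ z, F m z ∂ρ) ^ n ≤ r ^ n := pow_le_pow_left₀ hIF hmint.le n
  have hrn : r ^ n = Real.exp ((n : ℝ) * Real.log r) := by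
    rw [Real.exp_nat_mul, Real.exp_log hr0]
  calc Real.exp ((m : ℝ) * (n * δ)) * (∫ z, F m z ∂ρ) ^ n
      ≤ Real.exp ((m : ℝ) * (n * δ)) * r ^ n :=
        mul_le_mul_of_nonneg_left hpow (Real.exp_pos _).le
    _ = Real.exp ((m : ℝ) * (n * δ) + (n : ℝ) * Real.log r) := by
        rw [hrn, ← Real.exp_add]
    _ ≤ Real.exp (-(n * (c/2))) := by
        apply Real.exp_le_exp.mpr
        have hlogr : Real.log r = -c := by rw [hcdef]; ring
        rw [hlogr]
        have hδle : δ ≤ c / (2 * m) := le_of_lt hδδ0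
        have hn0 : (0:ℝ) ≤ n := Nat.cast_nonneg n
        have key : (m : ℝ) * δ ≤ c / 2 := by
          have hmne : (m:ℝ) ≠ 0 := hmpos.ne'
          calc (m:ℝ) * δ ≤ (m:ℝ) * (c / (2*m)) :=
                mul_le_mul_of_nonneg_left hδle hmpos.le
            _ = c / 2 := by field_simp
        nlinarith
end
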